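/- arXiv:1611.07658 — 9 statements merged into one kernel-verified Lean document; each statement's English description precedes it below -/
import Mathlib

section
/- Fix an integer N ≥ 0 and define, for x = (x₁,x₂) ∈ (0,1)², f(x) = x₁ + (1−x₁)(1−(1−x₂)^N), a₁(x) = x₂ + (1−x₂)f(x), and a₂(x) = x₂ + (1−x₂)f(x)³. Then the map x ↦ (a₁(x), a₂(x)) is injective on (0,1)²: if x ≠ x′ then (a₁(x), a₂(x)) ≠ (a₁(x′), a₂(x′)). -/
/-- Fix an integer `N ≥ 0`. For `x = (x₁, x₂) ∈ (0,1)²` define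
`f x = x₁ + (1 - x₁) * (1 - (1 - x₂) ^ N)`, `a₁ x = x₂ + (1 - x₂) * f x`,
`a₂ x = x₂ + (1 - x₂) * (f x)³`. Then `x ↦ (a₁ x, a₂ x)` is injective on `(0,1)²`. -/
theorem stmt0 (N : ℕ) (x x' : ℝ × ℝ)
    (hx : x ∈ Set.Ioo (0 : ℝ) 1 ×ˢ Set.Ioo (0 : ℝ) 1)
    (hx' : x' ∈ Set.Ioo (0 : ℝ) 1 ×ˢ Set.Ioo (0 : ℝ) 1)
    (hne : x ≠ x') :
    (x.2 + (1 - x.2) * (x.1 + (1 - x.1) * (1 - (1 - x.2) ^ N)),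
      x.2 + (1 - x.2) * (x.1 + (1 - x.1) * (1 - (1 - x.2) ^ N)) ^ 3) ≠
    (x'.2 + (1 - x'.2) * (x'.1 + (1 - x'.1) * (1 - (1 - x'.2) ^ N)),
      x'.2 + (1 - x'.2) * (x'.1 + (1 - x'.1) * (1 - (1 - x'.2) ^ N)) ^ 3) := by
  obtain ⟨⟨h1l, h1r⟩, h2l, h2r⟩ := hx
  obtain ⟨⟨h1l', h1r'⟩, h2l', h2r'⟩ := hx'
  intro h
  apply hne
  have h1 := congrArg Prod.fst h
  have h2 := congrArg Prod.snd h
  simp only at h1 h2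
  set f : ℝ := x.1 + (1 - x.1) * (1 - (1 - x.2) ^ N) with hf
  set f' : ℝ := x'.1 + (1 - x'.1) * (1 - (1 - x'.2) ^ N) with hf'
  have hu : (0:ℝ) < 1 - x.2 := by linarith
  have hu' : (0:ℝ) < 1 - x'.2 := by linarith
  have hq : (0:ℝ) < (1 - x.2) ^ N := pow_pos hu N
  have hq' : (0:ℝ) < (1 - x'.2) ^ N := pow_pos hu' N
  have hq1 : (1 - x.2) ^ N ≤ 1 := pow_le_one₀ (by linarith) (by linarith)
  have hq1' : (1 - x'.2) ^ N ≤ 1 := pow_le_one₀ (by linarith) (by linarith)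
  have hf0 : 0 < f := by nlinarith
  have hf0' : 0 < f' := by nlinarith
  have hf1 : f < 1 := by nlinarith
  have hf1' : f' < 1 := by nlinarith
  have e1 : (1 - x.2) * (1 - f) = (1 - x'.2) * (1 - f') := by linear_combination -h1
  have e3 : (1 - x'.2) * (1 - f') * (1 + f + f ^ 2) =
      (1 - x'.2) * (1 - f') * (1 + f' + f' ^ 2) := by
    linear_combination (-(1 + f + f ^ 2)) * e1 - h2
  have hpos : (1 - x'.2) * (1 - f') ≠ 0 :=
    ne_of_gt (mul_pos hu' (by linarith))
  have e4 : 1 + f + f ^ 2 = 1 + f' + f' ^ 2 := mul_left_cancel₀ hpos e3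
  have h6 : (f - f') * (1 + f + f') = 0 := by linear_combination e4
  have hff : f = f' := by
    rcases mul_eq_zero.1 h6 with h' | h'
    · linarith
    · linarith
  have hx2 : x.2 = x'.2 := by
    rw [hff] at e1
    have := mul_right_cancel₀ (by linarith : (1 - f') ≠ 0) e1
    linarith
  have hA : (1 - x.2) ^ N = (1 - x'.2) ^ N := by rw [hx2]
  have h5 : (x.1 - x'.1) * (1 - x'.2) ^ N = 0 := by
    linear_combination hff + (1 - x.1) * hA
  have hx1 : x.1 = x'.1 := by
    rcases mul_eq_zero.1 h5 with h | h
    · linarith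
    · exact absurd h (ne_of_gt hq')
  exact Prod.ext hx1 hx2
end

section
/- Let n ≥ 3 and consider the links-and-triangles SUGM on n nodes with parameters (β_L, β_T) ∈ (0,1)². Let S_L(g) = (Σ_{i<j} g_ij)/C(n,2) be the fraction of pairs that are linked and S_T(g) = (Σ_{i<j<k} g_ij g_jk g_ik)/C(n,3) the fraction of triples forming triangles. Then the map (β_L, β_T) ↦ (E_{β_L,β_T}[S_L(g)], E_{β_L,β_T}[S_T(g)]) is injective on (0,1)²: if (β_L′, β_T′) ≠ (β_L, β_T) then the corresponding pairs of expectations differ. -/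
open MeasureTheory

/-- A Bernoulli measure on `Bool` with success probability `p`. -/
noncomputable def bern (p : ℝ) : Measure Bool :=
  ENNReal.ofReal p • Measure.dirac true + ENNReal.ofReal (1 - p) • Measure.dirac false

/-- The links-and-triangles SUGM on `n` nodes: independently, every pair of nodes forms a
direct link with probability `βL`, and every triple of nodes forms a triangle with
probability `βT`. -/
noncomputable def sugm (n : ℕ) (βL βT : ℝ) : Measure (Finset (Fin n) → Bool) :=
  Measure.pi fun s => if s.card = 2 then bern βL else if s.card = 3 then bern βT else bern 0

/-- The observed graph: `i` and `j` are linked iff the direct link `{i, j}` formed or some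
triangle `{i, j, k}` formed. -/
def edgeObs {n : ℕ} (ω : Finset (Fin n) → Bool) (i j : Fin n) : Bool :=
  ω {i, j} || decide (∃ k : Fin n, k ≠ i ∧ k ≠ j ∧ ω {i, j, k} = true)

/-- `S_L(g)`: the fraction of pairs of nodes that are linked in the observed graph. -/
noncomputable def SLfrac (n : ℕ) (ω : Finset (Fin n) → Bool) : ℝ :=
  (∑ i : Fin n, ∑ j : Fin n, if i < j ∧ edgeObs ω i j = true then (1 : ℝ) else 0) /
    (n.choose 2)

/-- `S_T(g)`: the fraction of triples of nodes forming triangles in the observed graph. -/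
noncomputable def STfrac (n : ℕ) (ω : Finset (Fin n) → Bool) : ℝ :=
  (∑ i : Fin n, ∑ j : Fin n, ∑ k : Fin n,
      if i < j ∧ j < k ∧ edgeObs ω i j = true ∧ edgeObs ω j k = true ∧ edgeObs ω i k = true
      then (1 : ℝ) else 0) / (n.choose 3)

namespace Stmt2Aux

lemma bern_true (p : ℝ) : bern p {true} = ENNReal.ofReal p := by simp [bern]
lemma bern_false (p : ℝ) : bern p {false} = ENNReal.ofReal (1 - p) := by simp [bern]

lemma bern_prob {p : ℝ} (h0 : 0 ≤ p) (h1 : p ≤ 1) : IsProbabilityMeasure (bern p) := by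
  constructor
  rw [show (Set.univ : Set Bool) = {true} ∪ {false} by ext b; cases b <;> simp]
  rw [measure_union (by simp) (by simp)]
  simp [bern, ← ENNReal.ofReal_add h0 (by linarith : (0:ℝ) ≤ 1 - p)]

/-- the edge/triangle probability assigned to coordinate `s` -/
noncomputable def pf (n : ℕ) (βL βT : ℝ) (s : Finset (Fin n)) : ℝ :=
  if s.card = 2 then βL else if s.card = 3 then βT else 0

lemma sugm_prob {n : ℕ} {βL βT : ℝ} (hL0 : 0 ≤ βL) (hL1 : βL ≤ 1) (hT0 : 0 ≤ βT)
    (hT1 : βT ≤ 1) : IsProbabilityMeasure (sugm n βL βT) := by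
  haveI : ∀ s : Finset (Fin n), IsProbabilityMeasure
      (if s.card = 2 then bern βL else if s.card = 3 then bern βT else bern 0) := by
    intro s
    split_ifs
    · exact bern_prob hL0 hL1
    · exact bern_prob hT0 hT1
    · exact bern_prob le_rfl zero_le_one
  exact MeasureTheory.Measure.pi.instIsProbabilityMeasure _

lemma pf_mem {n : ℕ} {βL βT : ℝ} (hL0 : 0 ≤ βL) (hL1 : βL ≤ 1) (hT0 : 0 ≤ βT)
    (hT1 : βT ≤ 1) (s : Finset (Fin n)) : 0 ≤ pf n βL βT s ∧ pf n βL βT s ≤ 1 := by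
  unfold pf; split_ifs <;> constructor <;> first | assumption | norm_num

lemma sugm_singleton {n : ℕ} {βL βT : ℝ} (hL0 : 0 ≤ βL) (hL1 : βL ≤ 1) (hT0 : 0 ≤ βT)
    (hT1 : βT ≤ 1) (ω : Finset (Fin n) → Bool) :
    ((sugm n βL βT) {ω}).toReal
      = ∏ s : Finset (Fin n), (if ω s then pf n βL βT s else 1 - pf n βL βT s) := by
  have h1 : ({ω} : Set (Finset (Fin n) → Bool)) = Set.pi Set.univ (fun s => {ω s}) :=
    (Set.univ_pi_singleton ω).symm
  haveI : ∀ s : Finset (Fin n), SigmaFinite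
      (if s.card = 2 then bern βL else if s.card = 3 then bern βT else bern 0) := by
    intro s
    haveI h2 := bern_prob hL0 hL1
    haveI h3 := bern_prob hT0 hT1
    haveI h0 := bern_prob (le_refl (0:ℝ)) zero_le_one
    split_ifs <;> infer_instance
  rw [sugm, h1, Measure.pi_pi, ENNReal.toReal_prod]
  refine Finset.prod_congr rfl fun s _ => ?_
  obtain ⟨h0, h1'⟩ := pf_mem hL0 hL1 hT0 hT1 (βL := βL) (βT := βT) s
  cases hb : ω s
  · have : (if s.card = 2 then bern βL else if s.card = 3 then bern βT else bern 0) {false}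
        = ENNReal.ofReal (1 - pf n βL βT s) := by
      unfold pf; split_ifs <;> simp [bern_false]
    simp [this, ENNReal.toReal_ofReal (by linarith : (0:ℝ) ≤ 1 - pf n βL βT s)]
  · have : (if s.card = 2 then bern βL else if s.card = 3 then bern βT else bern 0) {true}
        = ENNReal.ofReal (pf n βL βT s) := by
      unfold pf; split_ifs <;> simp [bern_true]
    simp [this, ENNReal.toReal_ofReal h0]

/-- weight of an atom -/
noncomputable def wt (n : ℕ) (βL βT : ℝ) (ω : Finset (Fin n) → Bool) : ℝ :=
  ∏ s : Finset (Fin n), (if ω s then pf n βL βT s else 1 - pf n βL βT s)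

lemma integral_sugm {n : ℕ} {βL βT : ℝ} (hL0 : 0 ≤ βL) (hL1 : βL ≤ 1) (hT0 : 0 ≤ βT)
    (hT1 : βT ≤ 1) (f : (Finset (Fin n) → Bool) → ℝ) :
    ∫ ω, f ω ∂(sugm n βL βT)
      = ∑ ω : Finset (Fin n) → Bool, wt n βL βT ω * f ω := by
  haveI := sugm_prob hL0 hL1 hT0 hT1 (n := n)
  rw [integral_fintype (.of_finite)]
  refine Finset.sum_congr rfl fun ω _ => ?_
  rw [wt, measureReal_def, sugm_singleton hL0 hL1 hT0 hT1, smul_eq_mul]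

lemma W_prod (n : ℕ) (βL βT : ℝ) (g : Finset (Fin n) → Bool → ℝ) :
    ∑ ω : Finset (Fin n) → Bool, wt n βL βT ω * ∏ s : Finset (Fin n), g s (ω s)
      = ∏ s : Finset (Fin n),
          (pf n βL βT s * g s true + (1 - pf n βL βT s) * g s false) := by
  have h1 : ∀ ω : Finset (Fin n) → Bool,
      wt n βL βT ω * ∏ s : Finset (Fin n), g s (ω s)
        = ∏ s : Finset (Fin n),
            ((if ω s then pf n βL βT s else 1 - pf n βL βT s) * g s (ω s)) := by
    intro ω; rw [wt, ← Finset.prod_mul_distrib]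
  simp only [h1]
  rw [← Fintype.prod_sum fun s b => (if b then pf n βL βT s else 1 - pf n βL βT s) * g s b]
  refine Finset.prod_congr rfl fun s _ => ?_
  simp [Fintype.sum_bool]

/-- expectation of the indicator that all coordinates in `S` are off -/
lemma W_off (n : ℕ) (βL βT : ℝ) (S : Finset (Finset (Fin n))) :
    ∑ ω : Finset (Fin n) → Bool,
        wt n βL βT ω * ∏ s ∈ S, (if ω s then (0:ℝ) else 1)
      = ∏ s ∈ S, (1 - pf n βL βT s) := by
  have h1 : ∀ ω : Finset (Fin n) → Bool,
      (∏ s ∈ S, (if ω s then (0:ℝ) else 1))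
        = ∏ s : Finset (Fin n), (if s ∈ S then (if ω s then (0:ℝ) else 1) else 1) := by
    intro ω
    rw [Finset.prod_ite_mem Finset.univ S fun s => if ω s then (0:ℝ) else 1,
      Finset.univ_inter]
  simp only [h1]
  rw [W_prod n βL βT fun s b => if s ∈ S then (if b then (0:ℝ) else 1) else 1]
  rw [show ∏ s ∈ S, (1 - pf n βL βT s)
      = ∏ s : Finset (Fin n), (if s ∈ S then 1 - pf n βL βT s else 1) by
    rw [Finset.prod_ite_mem Finset.univ S fun s => 1 - pf n βL βT s, Finset.univ_inter]]
  refine Finset.prod_congr rfl fun s _ => ?_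
  by_cases h : s ∈ S <;> simp [h]

lemma W_one (n : ℕ) (βL βT : ℝ) :
    ∑ ω : Finset (Fin n) → Bool, wt n βL βT ω = 1 := by
  have := W_off n βL βT ∅
  simpa using this

/-- the coordinates feeding edge `{i,j}`, with third vertices outside `E` -/
def cset {n : ℕ} (i j : Fin n) (E : Finset (Fin n)) : Finset (Finset (Fin n)) :=
  insert {i, j} ((Finset.univ \ E).image fun l => ({i, j, l} : Finset (Fin n)))

lemma mem_cset {n : ℕ} {i j : Fin n} {E : Finset (Fin n)} {s : Finset (Fin n)} :
    s ∈ cset i j E ↔ s = {i, j} ∨ ∃ l, l ∉ E ∧ s = {i, j, l} := by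
  simp [cset, eq_comm]

lemma card_pair {n : ℕ} {i j : Fin n} (hij : i ≠ j) : ({i, j} : Finset (Fin n)).card = 2 := by
  rw [Finset.card_insert_of_notMem (by simp [hij]), Finset.card_singleton]

lemma card_triple {n : ℕ} {i j l : Fin n} (hij : i ≠ j) (hil : i ≠ l) (hjl : j ≠ l) :
    ({i, j, l} : Finset (Fin n)).card = 3 := by
  rw [Finset.card_insert_of_notMem (by simp [hij, hil]),
    Finset.card_insert_of_notMem (by simp [hjl]), Finset.card_singleton]

lemma prod_cset {n : ℕ} (βL βT : ℝ) {i j : Fin n} {E : Finset (Fin n)}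
    (hij : i ≠ j) (hiE : i ∈ E) (hjE : j ∈ E) :
    ∏ s ∈ cset i j E, (1 - pf n βL βT s) = (1 - βL) * (1 - βT) ^ (n - E.card) := by
  have hinj : ∀ l ∈ Finset.univ \ E, ∀ l' ∈ Finset.univ \ E,
      ({i, j, l} : Finset (Fin n)) = {i, j, l'} → l = l' := by
    intro l hl l' hl' hs
    simp only [Finset.mem_sdiff] at hl hl'
    have h1 : l ∈ ({i, j, l'} : Finset (Fin n)) := hs ▸ (by simp)
    simp only [Finset.mem_insert, Finset.mem_singleton] at h1
    rcases h1 with h | h | h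
    · exact absurd (h ▸ hiE) hl.2
    · exact absurd (h ▸ hjE) hl.2
    · exact h
  have hnotmem : ({i, j} : Finset (Fin n)) ∉
      (Finset.univ \ E).image fun l => ({i, j, l} : Finset (Fin n)) := by
    intro hmem
    simp only [Finset.mem_image, Finset.mem_sdiff] at hmem
    obtain ⟨l, ⟨-, hlE⟩, hl⟩ := hmem
    have : l ∈ ({i, j} : Finset (Fin n)) := hl ▸ (by simp)
    simp only [Finset.mem_insert, Finset.mem_singleton] at this
    rcases this with h | h
    · exact hlE (h ▸ hiE)
    · exact hlE (h ▸ hjE)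
  rw [cset, Finset.prod_insert hnotmem, Finset.prod_image hinj]
  have h2 : pf n βL βT {i, j} = βL := by rw [pf, if_pos (card_pair hij)]
  have h3 : ∀ l ∈ Finset.univ \ E, (1 - pf n βL βT {i, j, l}) = 1 - βT := by
    intro l hl
    simp only [Finset.mem_sdiff] at hl
    have hil : i ≠ l := fun h => hl.2 (h ▸ hiE)
    have hjl : j ≠ l := fun h => hl.2 (h ▸ hjE)
    rw [pf, if_neg (by rw [card_triple hij hil hjl]; norm_num),
      if_pos (card_triple hij hil hjl)]
  rw [Finset.prod_congr rfl h3, Finset.prod_const, h2,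
    Finset.card_sdiff_of_subset (Finset.subset_univ E), Finset.card_univ, Fintype.card_fin]

/-- conditional description of edge observation -/
lemma edge_false_iff {n : ℕ} {ω : Finset (Fin n) → Bool} {i j : Fin n} {E : Finset (Fin n)}
    (hiE : i ∈ E) (hjE : j ∈ E)
    (hE : ∀ l ∈ E, l ≠ i → l ≠ j → ω {i, j, l} = false) :
    edgeObs ω i j = false ↔ ∀ s ∈ cset i j E, ω s = false := by
  rw [edgeObs, Bool.or_eq_false_iff]
  simp only [decide_eq_false_iff_not, not_exists, not_and]
  constructor
  · rintro ⟨h1, h2⟩ s hs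
    rcases mem_cset.mp hs with rfl | ⟨l, hlE, rfl⟩
    · exact h1
    · have hli : l ≠ i := fun h => hlE (h ▸ hiE)
      have hlj : l ≠ j := fun h => hlE (h ▸ hjE)
      exact Bool.eq_false_iff.mpr (h2 l hli hlj)
  · intro hall
    refine ⟨hall _ (mem_cset.mpr (Or.inl rfl)), fun l hli hlj hl => ?_⟩
    by_cases hlE : l ∈ E
    · rw [hE l hlE hli hlj] at hl; exact Bool.false_ne_true hl
    · rw [hall _ (mem_cset.mpr (Or.inr ⟨l, hlE, rfl⟩))] at hl; exact Bool.false_ne_true hl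

/-- the edge indicator as `1 -` product of off-indicators -/
lemma edge_ind {n : ℕ} {ω : Finset (Fin n) → Bool} {i j : Fin n} {E : Finset (Fin n)}
    (hiE : i ∈ E) (hjE : j ∈ E)
    (hE : ∀ l ∈ E, l ≠ i → l ≠ j → ω {i, j, l} = false) :
    (if edgeObs ω i j = true then (1:ℝ) else 0)
      = 1 - ∏ s ∈ cset i j E, (if ω s then (0:ℝ) else 1) := by
  by_cases h : edgeObs ω i j = true
  · rw [if_pos h]
    have : ¬ ∀ s ∈ cset i j E, ω s = false := by
      rw [← edge_false_iff hiE hjE hE]; simp [h]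
    push_neg at this
    obtain ⟨s, hs, hωs⟩ := this
    rw [Finset.prod_eq_zero hs (by simp [Bool.not_eq_false] at hωs; simp [hωs])]
    norm_num
  · rw [if_neg h]
    have hall := (edge_false_iff hiE hjE hE).mp (Bool.not_eq_true _ ▸ h)
    rw [Finset.prod_eq_one fun s hs => by rw [hall s hs]; simp]
    norm_num

/-- expectation of a single edge indicator -/
lemma E_edge {n : ℕ} (βL βT : ℝ) {i j : Fin n} (hij : i ≠ j) :
    ∑ ω : Finset (Fin n) → Bool,
        wt n βL βT ω * (if edgeObs ω i j = true then (1:ℝ) else 0)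
      = 1 - (1 - βL) * (1 - βT) ^ (n - 2) := by
  have hE : ∀ ω : Finset (Fin n) → Bool, ∀ l ∈ ({i, j} : Finset (Fin n)),
      l ≠ i → l ≠ j → ω {i, j, l} = false := by
    intro ω l hl hli hlj
    simp only [Finset.mem_insert, Finset.mem_singleton] at hl
    tauto
  have h1 : ∀ ω : Finset (Fin n) → Bool,
      wt n βL βT ω * (if edgeObs ω i j = true then (1:ℝ) else 0)
        = wt n βL βT ω
          - wt n βL βT ω * ∏ s ∈ cset i j {i, j}, (if ω s then (0:ℝ) else 1) := by
    intro ω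
    rw [edge_ind (by simp) (by simp) (hE ω)]; ring
  rw [Finset.sum_congr rfl fun ω _ => h1 ω, Finset.sum_sub_distrib, W_one, W_off,
    prod_cset βL βT hij (by simp) (by simp), card_pair hij]
/-- two csets over the same excluded set are disjoint when the base pairs differ -/
lemma cset_disjoint {n : ℕ} {a b c d : Fin n} {E : Finset (Fin n)}
    (hab : a ≠ b) (hcd : c ≠ d) (haE : a ∈ E) (hbE : b ∈ E) (hcE : c ∈ E) (hdE : d ∈ E)
    (hne : ({a, b} : Finset (Fin n)) ≠ {c, d}) :
    Disjoint (cset a b E) (cset c d E) := by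
  rw [Finset.disjoint_left]
  intro s hs hs'
  rcases mem_cset.mp hs with rfl | ⟨l, hlE, rfl⟩ <;>
    rcases mem_cset.mp hs' with h' | ⟨l', hlE', h'⟩
  · exact hne h'
  · have := card_pair hab
    rw [h', card_triple hcd (fun h => hlE' (by rw [← h]; exact hcE))
      (fun h => hlE' (by rw [← h]; exact hdE))] at this
    norm_num at this
  · have := card_pair hcd
    rw [← h', card_triple hab (fun h => hlE (by rw [← h]; exact haE))
      (fun h => hlE (by rw [← h]; exact hbE))] at this
    norm_num at this
  · -- {a,b,l} = {c,d,l'} with l,l' ∉ E forces {c,d} ⊆ {a,b}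
    apply hne
    have hsub : ({c, d} : Finset (Fin n)) ⊆ {a, b} := by
      intro x hx
      simp only [Finset.mem_insert, Finset.mem_singleton] at hx
      have hxE : x ∈ E := by rcases hx with rfl | rfl; exacts [hcE, hdE]
      have hxmem : x ∈ ({a, b, l} : Finset (Fin n)) := by
        rw [h']; rcases hx with rfl | rfl <;> simp
      simp only [Finset.mem_insert, Finset.mem_singleton] at hxmem ⊢
      rcases hxmem with h | h | rfl
      · exact Or.inl h
      · exact Or.inr h
      · exact absurd hxE hlE
    exact (Finset.eq_of_subset_of_card_le hsub
      (by rw [card_pair hab, card_pair hcd])).symm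

/-- `E ∉ cset a b E` whenever its intended third vertices are excluded -/
lemma notmem_cset {n : ℕ} {a b : Fin n} {E : Finset (Fin n)} (hab : a ≠ b)
    (hcard : E.card = 3) : E ∉ cset a b E := by
  intro hmem
  rcases mem_cset.mp hmem with h | ⟨l, hlE, h⟩
  · rw [h, card_pair hab] at hcard; norm_num at hcard
  · exact hlE (h ▸ (by simp : l ∈ ({a, b, l} : Finset (Fin n))))

/-- generic expectation of `N₀ (1-N₁)(1-N₂)(1-N₃)` for pairwise disjoint coordinate sets -/
lemma W_gen {n : ℕ} (βL βT : ℝ) (T0 T1 T2 T3 : Finset (Finset (Fin n)))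
    (h01 : Disjoint T0 T1) (h02 : Disjoint T0 T2) (h03 : Disjoint T0 T3)
    (h12 : Disjoint T1 T2) (h13 : Disjoint T1 T3) (h23 : Disjoint T2 T3) :
    ∑ ω : Finset (Fin n) → Bool,
        wt n βL βT ω * ((∏ s ∈ T0, (if ω s then (0:ℝ) else 1)) *
          ((1 - ∏ s ∈ T1, (if ω s then (0:ℝ) else 1)) *
           (1 - ∏ s ∈ T2, (if ω s then (0:ℝ) else 1)) *
           (1 - ∏ s ∈ T3, (if ω s then (0:ℝ) else 1))))
      = (∏ s ∈ T0, (1 - pf n βL βT s)) *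
          ((1 - ∏ s ∈ T1, (1 - pf n βL βT s)) * (1 - ∏ s ∈ T2, (1 - pf n βL βT s)) *
           (1 - ∏ s ∈ T3, (1 - pf n βL βT s))) := by
  classical
  set F : (Finset (Fin n) → Bool) → Finset (Finset (Fin n)) → ℝ :=
    fun ω T => ∏ s ∈ T, (if ω s then (0:ℝ) else 1) with hF
  have hmul : ∀ (A B : Finset (Finset (Fin n))), Disjoint A B → ∀ ω,
      F ω (A ∪ B) = F ω A * F ω B := by
    intro A B hAB ω; exact Finset.prod_union hAB
  have hd012 : Disjoint (T0 ∪ T1) T2 := Finset.disjoint_union_left.mpr ⟨h02, h12⟩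
  have hd013 : Disjoint (T0 ∪ T1) T3 := Finset.disjoint_union_left.mpr ⟨h03, h13⟩
  have hd023 : Disjoint (T0 ∪ T2) T3 := Finset.disjoint_union_left.mpr ⟨h03, h23⟩
  have hd0123 : Disjoint (T0 ∪ T1 ∪ T2) T3 :=
    Finset.disjoint_union_left.mpr ⟨hd013, h23⟩
  have hpt : ∀ ω : Finset (Fin n) → Bool,
      wt n βL βT ω * (F ω T0 * ((1 - F ω T1) * (1 - F ω T2) * (1 - F ω T3)))
        = wt n βL βT ω * F ω T0
          - wt n βL βT ω * F ω (T0 ∪ T1)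
          - wt n βL βT ω * F ω (T0 ∪ T2)
          - wt n βL βT ω * F ω (T0 ∪ T3)
          + wt n βL βT ω * F ω (T0 ∪ T1 ∪ T2)
          + wt n βL βT ω * F ω (T0 ∪ T1 ∪ T3)
          + wt n βL βT ω * F ω (T0 ∪ T2 ∪ T3)
          - wt n βL βT ω * F ω (T0 ∪ T1 ∪ T2 ∪ T3) := by
    intro ω
    rw [hmul _ _ h01, hmul _ _ h02, hmul _ _ h03,
      hmul _ _ hd012, hmul _ _ h01, hmul _ _ hd013, hmul _ _ h01,
      hmul _ _ hd023, hmul _ _ h02, hmul _ _ hd0123, hmul _ _ hd012, hmul _ _ h01]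
    ring
  rw [Finset.sum_congr rfl fun ω _ => hpt ω]
  simp only [Finset.sum_sub_distrib, Finset.sum_add_distrib]
  have hW : ∀ T : Finset (Finset (Fin n)),
      ∑ ω : Finset (Fin n) → Bool, wt n βL βT ω * F ω T
        = ∏ s ∈ T, (1 - pf n βL βT s) := fun T => W_off n βL βT T
  set v : Finset (Finset (Fin n)) → ℝ := fun T => ∏ s ∈ T, (1 - pf n βL βT s) with hv
  have hvmul : ∀ (A B : Finset (Finset (Fin n))), Disjoint A B →
      v (A ∪ B) = v A * v B := by
    intro A B hAB; exact Finset.prod_union hAB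
  rw [hW, hW, hW, hW, hW, hW, hW, hW]
  show v T0 - v (T0 ∪ T1) - v (T0 ∪ T2) - v (T0 ∪ T3) + v (T0 ∪ T1 ∪ T2)
      + v (T0 ∪ T1 ∪ T3) + v (T0 ∪ T2 ∪ T3) - v (T0 ∪ T1 ∪ T2 ∪ T3)
    = v T0 * ((1 - v T1) * (1 - v T2) * (1 - v T3))
  rw [hvmul _ _ h01, hvmul _ _ h02, hvmul _ _ h03,
    hvmul _ _ hd012, hvmul _ _ h01, hvmul _ _ hd013, hvmul _ _ h01,
    hvmul _ _ hd023, hvmul _ _ h02, hvmul _ _ hd0123, hvmul _ _ hd012, hvmul _ _ h01]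
  ring
lemma tri_sets1 {n : ℕ} (j k i : Fin n) : ({j, k, i} : Finset (Fin n)) = {i, j, k} := by
  ext x; simp; tauto

lemma tri_sets2 {n : ℕ} (i k j : Fin n) : ({i, k, j} : Finset (Fin n)) = {i, j, k} := by
  ext x; simp; tauto

/-- the triangle indicator, conditioned on the triple coordinate -/
lemma tri_ind {n : ℕ} {ω : Finset (Fin n) → Bool} {i j k : Fin n}
    (hij : i ≠ j) (hik : i ≠ k) (hjk : j ≠ k) :
    (if edgeObs ω i j = true ∧ edgeObs ω j k = true ∧ edgeObs ω i k = true
        then (1:ℝ) else 0)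
      = (1 - ∏ s ∈ ({({i,j,k} : Finset (Fin n))} : Finset (Finset (Fin n))),
            (if ω s then (0:ℝ) else 1))
        + (∏ s ∈ ({({i,j,k} : Finset (Fin n))} : Finset (Finset (Fin n))),
            (if ω s then (0:ℝ) else 1)) *
          ((1 - ∏ s ∈ cset i j {i,j,k}, (if ω s then (0:ℝ) else 1)) *
           (1 - ∏ s ∈ cset j k {i,j,k}, (if ω s then (0:ℝ) else 1)) *
           (1 - ∏ s ∈ cset i k {i,j,k}, (if ω s then (0:ℝ) else 1))) := by
  rw [Finset.prod_singleton]
  by_cases hc : ω ({i,j,k} : Finset (Fin n)) = true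
  · have e1 : edgeObs ω i j = true := by
      rw [edgeObs, Bool.or_eq_true, decide_eq_true_eq]
      exact Or.inr ⟨k, hik.symm, hjk.symm, hc⟩
    have e2 : edgeObs ω j k = true := by
      rw [edgeObs, Bool.or_eq_true, decide_eq_true_eq]
      exact Or.inr ⟨i, hij, hik, by rw [tri_sets1]; exact hc⟩
    have e3 : edgeObs ω i k = true := by
      rw [edgeObs, Bool.or_eq_true, decide_eq_true_eq]
      exact Or.inr ⟨j, hij.symm, hjk, by rw [tri_sets2]; exact hc⟩
    rw [if_pos ⟨e1, e2, e3⟩, hc]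
    norm_num
  · have hcf : ω ({i,j,k} : Finset (Fin n)) = false := by
      rwa [← Bool.not_eq_true]
    have hiE : i ∈ ({i,j,k} : Finset (Fin n)) := by simp
    have hjE : j ∈ ({i,j,k} : Finset (Fin n)) := by simp
    have hkE : k ∈ ({i,j,k} : Finset (Fin n)) := by simp
    have hmem : ∀ l, l ∈ ({i,j,k} : Finset (Fin n)) → l = i ∨ l = j ∨ l = k := by
      intro l hl; simpa using hl
    have hEij : ∀ l ∈ ({i,j,k} : Finset (Fin n)), l ≠ i → l ≠ j → ω {i, j, l} = false := by
      intro l hl h1 h2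
      rcases hmem l hl with rfl | rfl | rfl
      · exact absurd rfl h1
      · exact absurd rfl h2
      · exact hcf
    have hEjk : ∀ l ∈ ({i,j,k} : Finset (Fin n)), l ≠ j → l ≠ k → ω {j, k, l} = false := by
      intro l hl h1 h2
      rcases hmem l hl with rfl | rfl | rfl
      · rw [tri_sets1]; exact hcf
      · exact absurd rfl h1
      · exact absurd rfl h2
    have hEik : ∀ l ∈ ({i,j,k} : Finset (Fin n)), l ≠ i → l ≠ k → ω {i, k, l} = false := by
      intro l hl h1 h2
      rcases hmem l hl with rfl | rfl | rfl
      · exact absurd rfl h1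
      · rw [tri_sets2]; exact hcf
      · exact absurd rfl h2
    have t1 := edge_ind (ω := ω) hiE hjE hEij
    have t2 := edge_ind (ω := ω) hjE hkE hEjk
    have t3 := edge_ind (ω := ω) hiE hkE hEik
    have hsplit : (if edgeObs ω i j = true ∧ edgeObs ω j k = true ∧ edgeObs ω i k = true
        then (1:ℝ) else 0)
        = (if edgeObs ω i j = true then (1:ℝ) else 0)
          * (if edgeObs ω j k = true then (1:ℝ) else 0)
          * (if edgeObs ω i k = true then (1:ℝ) else 0) := by
      by_cases h1 : edgeObs ω i j = true <;> by_cases h2 : edgeObs ω j k = true <;>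
        by_cases h3 : edgeObs ω i k = true <;> simp [h1, h2, h3]
    rw [hsplit, t1, t2, t3, hcf]
    norm_num

/-- expectation of a single triangle indicator -/
lemma E_tri {n : ℕ} (βL βT : ℝ) {i j k : Fin n} (hij : i ≠ j) (hik : i ≠ k) (hjk : j ≠ k) :
    ∑ ω : Finset (Fin n) → Bool,
        wt n βL βT ω *
          (if edgeObs ω i j = true ∧ edgeObs ω j k = true ∧ edgeObs ω i k = true
            then (1:ℝ) else 0)
      = βT + (1 - βT) * (1 - (1 - βL) * (1 - βT) ^ (n - 3)) ^ 3 := by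
  have hcard : ({i,j,k} : Finset (Fin n)).card = 3 := card_triple hij hik hjk
  have hiE : i ∈ ({i,j,k} : Finset (Fin n)) := by simp
  have hjE : j ∈ ({i,j,k} : Finset (Fin n)) := by simp
  have hkE : k ∈ ({i,j,k} : Finset (Fin n)) := by simp
  have hne1 : ({i, j} : Finset (Fin n)) ≠ {j, k} := by
    intro hcon
    have : i ∈ ({j, k} : Finset (Fin n)) := hcon ▸ (by simp)
    simp only [Finset.mem_insert, Finset.mem_singleton] at this
    tauto
  have hne2 : ({i, j} : Finset (Fin n)) ≠ {i, k} := by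
    intro hcon
    have : j ∈ ({i, k} : Finset (Fin n)) := hcon ▸ (by simp)
    simp only [Finset.mem_insert, Finset.mem_singleton] at this
    rcases this with h | h
    · exact hij h.symm
    · exact hjk h
  have hne3 : ({j, k} : Finset (Fin n)) ≠ {i, k} := by
    intro hcon
    have : j ∈ ({i, k} : Finset (Fin n)) := hcon ▸ (by simp)
    simp only [Finset.mem_insert, Finset.mem_singleton] at this
    rcases this with h | h
    · exact hij h.symm
    · exact hjk h
  have d12 : Disjoint (cset i j {i,j,k}) (cset j k {i,j,k}) :=
    cset_disjoint hij hjk hiE hjE hjE hkE hne1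
  have d13 : Disjoint (cset i j {i,j,k}) (cset i k {i,j,k}) :=
    cset_disjoint hij hik hiE hjE hiE hkE hne2
  have d23 : Disjoint (cset j k {i,j,k}) (cset i k {i,j,k}) :=
    cset_disjoint hjk hik hjE hkE hiE hkE hne3
  have d01 : Disjoint ({({i,j,k} : Finset (Fin n))} : Finset (Finset (Fin n)))
      (cset i j {i,j,k}) :=
    Finset.disjoint_singleton_left.mpr (notmem_cset hij hcard)
  have d02 : Disjoint ({({i,j,k} : Finset (Fin n))} : Finset (Finset (Fin n)))
      (cset j k {i,j,k}) :=
    Finset.disjoint_singleton_left.mpr (notmem_cset hjk hcard)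
  have d03 : Disjoint ({({i,j,k} : Finset (Fin n))} : Finset (Finset (Fin n)))
      (cset i k {i,j,k}) :=
    Finset.disjoint_singleton_left.mpr (notmem_cset hik hcard)
  have hpt : ∀ ω : Finset (Fin n) → Bool,
      wt n βL βT ω *
          (if edgeObs ω i j = true ∧ edgeObs ω j k = true ∧ edgeObs ω i k = true
            then (1:ℝ) else 0)
        = (wt n βL βT ω
            - wt n βL βT ω * ∏ s ∈ ({({i,j,k} : Finset (Fin n))} : Finset (Finset (Fin n))),
                (if ω s then (0:ℝ) else 1))
          + wt n βL βT ω *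
              ((∏ s ∈ ({({i,j,k} : Finset (Fin n))} : Finset (Finset (Fin n))),
                  (if ω s then (0:ℝ) else 1)) *
                ((1 - ∏ s ∈ cset i j {i,j,k}, (if ω s then (0:ℝ) else 1)) *
                 (1 - ∏ s ∈ cset j k {i,j,k}, (if ω s then (0:ℝ) else 1)) *
                 (1 - ∏ s ∈ cset i k {i,j,k}, (if ω s then (0:ℝ) else 1)))) := by
    intro ω
    rw [tri_ind hij hik hjk]
    ring
  rw [Finset.sum_congr rfl fun ω _ => hpt ω, Finset.sum_add_distrib,
    Finset.sum_sub_distrib, W_one, W_off,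
    W_gen βL βT _ _ _ _ d01 d02 d03 d12 d13 d23]
  have hv0 : ∏ s ∈ ({({i,j,k} : Finset (Fin n))} : Finset (Finset (Fin n))),
      (1 - pf n βL βT s) = 1 - βT := by
    rw [Finset.prod_singleton, pf, if_neg (by rw [hcard]; norm_num), if_pos hcard]
  have hq1 : ∏ s ∈ cset i j {i,j,k}, (1 - pf n βL βT s)
      = (1 - βL) * (1 - βT) ^ (n - 3) := by
    rw [prod_cset βL βT hij hiE hjE, hcard]
  have hq2 : ∏ s ∈ cset j k {i,j,k}, (1 - pf n βL βT s)
      = (1 - βL) * (1 - βT) ^ (n - 3) := by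
    rw [prod_cset βL βT hjk hjE hkE, hcard]
  have hq3 : ∏ s ∈ cset i k {i,j,k}, (1 - pf n βL βT s)
      = (1 - βL) * (1 - βT) ^ (n - 3) := by
    rw [prod_cset βL βT hik hiE hkE, hcard]
  rw [hv0, hq1, hq2, hq3]
  ring

lemma int_SL {n : ℕ} {βL βT : ℝ} (hL0 : 0 ≤ βL) (hL1 : βL ≤ 1) (hT0 : 0 ≤ βT)
    (hT1 : βT ≤ 1) :
    ∫ ω, SLfrac n ω ∂(sugm n βL βT)
      = (∑ i : Fin n, ∑ j : Fin n, if i < j then (1:ℝ) else 0)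
          * (1 - (1 - βL) * (1 - βT) ^ (n - 2)) / (n.choose 2) := by
  rw [integral_sugm hL0 hL1 hT0 hT1]
  simp only [SLfrac]
  have h1 : ∀ ω : Finset (Fin n) → Bool,
      wt n βL βT ω *
        ((∑ i : Fin n, ∑ j : Fin n,
            if i < j ∧ edgeObs ω i j = true then (1:ℝ) else 0) / (n.choose 2))
      = (∑ i : Fin n, ∑ j : Fin n,
          wt n βL βT ω * (if i < j ∧ edgeObs ω i j = true then (1:ℝ) else 0))
          / (n.choose 2) := by
    intro ω
    rw [← mul_div_assoc]
    simp only [Finset.mul_sum]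
  rw [Finset.sum_congr rfl fun ω _ => h1 ω, ← Finset.sum_div]
  congr 1
  have perpair : ∀ i j : Fin n,
      ∑ ω : Finset (Fin n) → Bool,
          wt n βL βT ω * (if i < j ∧ edgeObs ω i j = true then (1:ℝ) else 0)
        = (if i < j then (1:ℝ) else 0) * (1 - (1 - βL) * (1 - βT) ^ (n - 2)) := by
    intro i j
    by_cases hij : i < j
    · simp only [hij, true_and, if_true, one_mul]
      exact E_edge βL βT (ne_of_lt hij)
    · simp [hij]
  have key : ∀ i : Fin n,
      ∑ ω : Finset (Fin n) → Bool, ∑ j : Fin n,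
          wt n βL βT ω * (if i < j ∧ edgeObs ω i j = true then (1:ℝ) else 0)
        = ∑ j : Fin n, (if i < j then (1:ℝ) else 0)
            * (1 - (1 - βL) * (1 - βT) ^ (n - 2)) := by
    intro i
    rw [Finset.sum_comm]
    exact Finset.sum_congr rfl fun j _ => perpair i j
  rw [Finset.sum_comm, Finset.sum_congr rfl fun i _ => key i]
  simp only [← Finset.sum_mul]

lemma int_ST {n : ℕ} {βL βT : ℝ} (hL0 : 0 ≤ βL) (hL1 : βL ≤ 1) (hT0 : 0 ≤ βT)
    (hT1 : βT ≤ 1) :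
    ∫ ω, STfrac n ω ∂(sugm n βL βT)
      = (∑ i : Fin n, ∑ j : Fin n, ∑ k : Fin n, if i < j ∧ j < k then (1:ℝ) else 0)
          * (βT + (1 - βT) * (1 - (1 - βL) * (1 - βT) ^ (n - 3)) ^ 3) / (n.choose 3) := by
  rw [integral_sugm hL0 hL1 hT0 hT1]
  simp only [STfrac]
  have h1 : ∀ ω : Finset (Fin n) → Bool,
      wt n βL βT ω *
        ((∑ i : Fin n, ∑ j : Fin n, ∑ k : Fin n,
            if i < j ∧ j < k ∧ edgeObs ω i j = true ∧ edgeObs ω j k = true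
              ∧ edgeObs ω i k = true then (1:ℝ) else 0) / (n.choose 3))
      = (∑ i : Fin n, ∑ j : Fin n, ∑ k : Fin n,
          wt n βL βT ω * (if i < j ∧ j < k ∧ edgeObs ω i j = true ∧ edgeObs ω j k = true
              ∧ edgeObs ω i k = true then (1:ℝ) else 0)) / (n.choose 3) := by
    intro ω
    rw [← mul_div_assoc]
    simp only [Finset.mul_sum]
  rw [Finset.sum_congr rfl fun ω _ => h1 ω, ← Finset.sum_div]
  congr 1
  have pertrip : ∀ i j k : Fin n,
      ∑ ω : Finset (Fin n) → Bool,
          wt n βL βT ω * (if i < j ∧ j < k ∧ edgeObs ω i j = true ∧ edgeObs ω j k = true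
              ∧ edgeObs ω i k = true then (1:ℝ) else 0)
        = (if i < j ∧ j < k then (1:ℝ) else 0)
            * (βT + (1 - βT) * (1 - (1 - βL) * (1 - βT) ^ (n - 3)) ^ 3) := by
    intro i j k
    by_cases hij : i < j
    · by_cases hjk : j < k
      · simp only [hij, hjk, true_and, if_true, one_mul]
        exact E_tri βL βT (ne_of_lt hij) (ne_of_lt (hij.trans hjk)) (ne_of_lt hjk)
      · simp [hjk]
    · simp [hij]
  have key2 : ∀ i j : Fin n,
      ∑ ω : Finset (Fin n) → Bool, ∑ k : Fin n,
          wt n βL βT ω * (if i < j ∧ j < k ∧ edgeObs ω i j = true ∧ edgeObs ω j k = true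
              ∧ edgeObs ω i k = true then (1:ℝ) else 0)
        = ∑ k : Fin n, (if i < j ∧ j < k then (1:ℝ) else 0)
            * (βT + (1 - βT) * (1 - (1 - βL) * (1 - βT) ^ (n - 3)) ^ 3) := by
    intro i j
    rw [Finset.sum_comm]
    exact Finset.sum_congr rfl fun k _ => pertrip i j k
  have key : ∀ i : Fin n,
      ∑ ω : Finset (Fin n) → Bool, ∑ j : Fin n, ∑ k : Fin n,
          wt n βL βT ω * (if i < j ∧ j < k ∧ edgeObs ω i j = true ∧ edgeObs ω j k = true
              ∧ edgeObs ω i k = true then (1:ℝ) else 0)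
        = ∑ j : Fin n, ∑ k : Fin n, (if i < j ∧ j < k then (1:ℝ) else 0)
            * (βT + (1 - βT) * (1 - (1 - βL) * (1 - βT) ^ (n - 3)) ^ 3) := by
    intro i
    rw [Finset.sum_comm]
    exact Finset.sum_congr rfl fun j _ => key2 i j
  rw [Finset.sum_comm, Finset.sum_congr rfl fun i _ => key i]
  simp only [← Finset.sum_mul]

lemma cnt2_pos {n : ℕ} (hn : 3 ≤ n) :
    0 < ∑ i : Fin n, ∑ j : Fin n, (if i < j then (1:ℝ) else 0) := by
  have h0 : ∀ i : Fin n, (0:ℝ) ≤ ∑ j : Fin n, (if i < j then (1:ℝ) else 0) :=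
    fun i => Finset.sum_nonneg fun j _ => by positivity
  refine Finset.sum_pos' (fun i _ => h0 i) ⟨⟨0, by omega⟩, Finset.mem_univ _, ?_⟩
  refine Finset.sum_pos' (fun j _ => by positivity) ⟨⟨1, by omega⟩, Finset.mem_univ _, ?_⟩
  rw [if_pos (by exact Fin.mk_lt_mk.mpr (by omega))]
  norm_num

lemma cnt3_pos {n : ℕ} (hn : 3 ≤ n) :
    0 < ∑ i : Fin n, ∑ j : Fin n, ∑ k : Fin n, (if i < j ∧ j < k then (1:ℝ) else 0) := by
  have h0 : ∀ (P : Prop) [Decidable P], (0:ℝ) ≤ if P then (1:ℝ) else 0 := by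
    intro P _; positivity
  refine Finset.sum_pos' (fun i _ => Finset.sum_nonneg fun j _ =>
    Finset.sum_nonneg fun k _ => h0 _) ⟨⟨0, by omega⟩, Finset.mem_univ _, ?_⟩
  refine Finset.sum_pos' (fun j _ => Finset.sum_nonneg fun k _ => h0 _)
    ⟨⟨1, by omega⟩, Finset.mem_univ _, ?_⟩
  refine Finset.sum_pos' (fun k _ => h0 _) ⟨⟨2, by omega⟩, Finset.mem_univ _, ?_⟩
  rw [if_pos ⟨Fin.mk_lt_mk.mpr (by omega), Fin.mk_lt_mk.mpr (by omega)⟩]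
  norm_num

lemma inj_alg {n : ℕ} (hn : 3 ≤ n) {βL βT βL' βT' : ℝ}
    (hL0 : 0 < βL) (hL1 : βL < 1) (hT0 : 0 < βT) (hT1 : βT < 1)
    (hL0' : 0 < βL') (hL1' : βL' < 1) (hT0' : 0 < βT') (hT1' : βT' < 1)
    (h1 : 1 - (1 - βL') * (1 - βT') ^ (n - 2) = 1 - (1 - βL) * (1 - βT) ^ (n - 2))
    (h2 : βT' + (1 - βT') * (1 - (1 - βL') * (1 - βT') ^ (n - 3)) ^ 3
        = βT + (1 - βT) * (1 - (1 - βL) * (1 - βT) ^ (n - 3)) ^ 3) :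
    βL' = βL ∧ βT' = βT := by
  set a := 1 - βL with ha_def
  set t := 1 - βT with ht_def
  set a' := 1 - βL' with ha'_def
  set t' := 1 - βT' with ht'_def
  have ha : 0 < a := by simp [ha_def]; linarith
  have ha1 : a < 1 := by simp [ha_def]; linarith
  have ht : 0 < t := by simp [ht_def]; linarith
  have ht1 : t < 1 := by simp [ht_def]; linarith
  have ha' : 0 < a' := by simp [ha'_def]; linarith
  have ha1' : a' < 1 := by simp [ha'_def]; linarith
  have ht' : 0 < t' := by simp [ht'_def]; linarith
  have ht1' : t' < 1 := by simp [ht'_def]; linarith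
  have hpow : n - 2 = (n - 3) + 1 := by omega
  set x := a * t ^ (n - 3) with hx_def
  set x' := a' * t' ^ (n - 3) with hx'_def
  have hx0 : 0 < x := mul_pos ha (pow_pos ht _)
  have hx0' : 0 < x' := mul_pos ha' (pow_pos ht' _)
  have htpow1 : t ^ (n - 3) ≤ 1 := pow_le_one₀ ht.le ht1.le
  have htpow1' : t' ^ (n - 3) ≤ 1 := pow_le_one₀ ht'.le ht1'.le
  have hx1 : x < 1 := by
    rw [hx_def]
    calc a * t ^ (n - 3) ≤ a * 1 := by
          exact mul_le_mul_of_nonneg_left htpow1 ha.le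
      _ = a := mul_one a
      _ < 1 := ha1
  have hx1' : x' < 1 := by
    rw [hx'_def]
    calc a' * t' ^ (n - 3) ≤ a' * 1 := mul_le_mul_of_nonneg_left htpow1' ha'.le
      _ = a' := mul_one a'
      _ < 1 := ha1'
  have e1 : x' * t' = x * t := by
    rw [hpow, pow_succ, pow_succ] at h1
    have : a' * (t' ^ (n - 3) * t') = a * (t ^ (n - 3) * t) := by linarith
    rw [hx_def, hx'_def]; ring_nf; ring_nf at this; linarith
  have h2' : 1 - t' + t' * (1 - x') ^ 3 = 1 - t + t * (1 - x) ^ 3 := by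
    have e2 : 1 - t' = βT' := by rw [ht'_def]; ring
    have e3 : 1 - t = βT := by rw [ht_def]; ring
    rw [e2, e3]; exact h2
  have key : (x' - x) * (t * x * (3 - x' - x)) = 0 := by
    linear_combination h2' + (3 - 3 * x' + x' ^ 2) * e1
  have hx'x : x' = x := by
    rcases mul_eq_zero.mp key with h | h
    · linarith [sub_eq_zero.mp h]
    · exfalso
      have hpos : 0 < t * x * (3 - x' - x) :=
        mul_pos (mul_pos ht hx0) (by linarith)
      linarith
  have ht't : t' = t := by
    rw [hx'x] at e1
    exact mul_left_cancel₀ (ne_of_gt hx0) e1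
  have ha'a : a' = a := by
    have hxx := hx'x
    rw [hx'_def, hx_def, ht't] at hxx
    exact mul_right_cancel₀ (ne_of_gt (pow_pos ht _)) hxx
  constructor
  · rw [ha'_def, ha_def] at ha'a; linarith
  · rw [ht'_def, ht_def] at ht't; linarith

end Stmt2Aux

open Stmt2Aux in
/-- For `n ≥ 3`, the map `(βL, βT) ↦ (E[S_L], E[S_T])` of the
links-and-triangles SUGM is injective on `(0,1)²`. -/
theorem stmt2 (n : ℕ) (hn : 3 ≤ n) (βL βT βL' βT' : ℝ)
    (h : (βL, βT) ∈ Set.Ioo (0 : ℝ) 1 ×ˢ Set.Ioo (0 : ℝ) 1)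
    (h' : (βL', βT') ∈ Set.Ioo (0 : ℝ) 1 ×ˢ Set.Ioo (0 : ℝ) 1)
    (hne : (βL', βT') ≠ (βL, βT)) :
    (∫ ω, SLfrac n ω ∂(sugm n βL' βT'), ∫ ω, STfrac n ω ∂(sugm n βL' βT')) ≠
      (∫ ω, SLfrac n ω ∂(sugm n βL βT), ∫ ω, STfrac n ω ∂(sugm n βL βT)) := by
  simp only [Set.mem_prod, Set.mem_Ioo] at h h'
  obtain ⟨⟨hL0, hL1⟩, hT0, hT1⟩ := h
  obtain ⟨⟨hL0', hL1'⟩, hT0', hT1'⟩ := h'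
  intro heq
  have heq1 := congrArg Prod.fst heq
  have heq2 := congrArg Prod.snd heq
  simp only at heq1 heq2
  rw [int_SL hL0'.le hL1'.le hT0'.le hT1'.le, int_SL hL0.le hL1.le hT0.le hT1.le] at heq1
  rw [int_ST hL0'.le hL1'.le hT0'.le hT1'.le, int_ST hL0.le hL1.le hT0.le hT1.le] at heq2
  have hc2 : (0:ℝ) < (n.choose 2 : ℝ) := by
    exact_mod_cast Nat.choose_pos (by omega : 2 ≤ n)
  have hc3 : (0:ℝ) < (n.choose 3 : ℝ) := by
    exact_mod_cast Nat.choose_pos hn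
  have hcnt2 := cnt2_pos (n := n) hn
  have hcnt3 := cnt3_pos (n := n) hn
  have hE1 : 1 - (1 - βL') * (1 - βT') ^ (n - 2) = 1 - (1 - βL) * (1 - βT) ^ (n - 2) := by
    rw [div_eq_div_iff (ne_of_gt hc2) (ne_of_gt hc2)] at heq1
    exact mul_left_cancel₀ (ne_of_gt hcnt2) (mul_right_cancel₀ (ne_of_gt hc2) heq1)
  have hE2 : βT' + (1 - βT') * (1 - (1 - βL') * (1 - βT') ^ (n - 3)) ^ 3
      = βT + (1 - βT) * (1 - (1 - βL) * (1 - βT) ^ (n - 3)) ^ 3 := by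
    rw [div_eq_div_iff (ne_of_gt hc3) (ne_of_gt hc3)] at heq2
    exact mul_left_cancel₀ (ne_of_gt hcnt3) (mul_right_cancel₀ (ne_of_gt hc3) heq2)
  obtain ⟨hLL, hTT⟩ := inj_alg hn hL0 hL1 hT0 hT1 hL0' hL1' hT0' hT1' hE1 hE2
  exact hne (by rw [hLL, hTT])
end

section
/- Let n ≥ 3 and consider the links-and-triangles SUGM on n nodes with parameters (β_L, β_T) ∈ [0,1]². For any three distinct nodes i, j, k, the probability that all three edges ij, jk, ik appear in the observed graph equals β_T + (1−β_T)·q̃_L³, where q̃_L = β_L + (1−β_L)(1−(1−β_T)^{n−3}). -/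
open MeasureTheory

namespace Stmt4Aux

open Finset

lemma bern_false (p : ℝ) : bern p {false} = ENNReal.ofReal (1 - p) := by simp [bern]

lemma bern_true (p : ℝ) : bern p {true} = ENNReal.ofReal p := by simp [bern]

lemma bern_univ (p : ℝ) (h0 : 0 ≤ p) (h1 : p ≤ 1) : bern p Set.univ = 1 := by
  simp only [bern, Measure.add_apply, Measure.smul_apply,
    Measure.dirac_apply' _ MeasurableSet.univ, Set.mem_univ, Set.indicator_of_mem,
    smul_eq_mul, mul_one, Pi.one_apply]
  rw [← ENNReal.ofReal_add h0 (by linarith)]; norm_num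

instance (p : ℝ) : IsFiniteMeasure (bern p) := by constructor; simp [bern]

/-- Every subset of the (finite) sample space is measurable. -/
lemma measSet {n : ℕ} (S : Set (Finset (Fin n) → Bool)) : MeasurableSet S := by
  have hsing : ∀ f : Finset (Fin n) → Bool, MeasurableSet {f} := by
    intro f
    have : {f} = Set.pi Set.univ (fun a => {f a}) := by
      ext g; simp [Set.eq_univ_iff_forall, funext_iff]
    rw [this]
    exact MeasurableSet.univ_pi (fun a => by trivial)
  have : S = ⋃ f ∈ S, {f} := by simp
  rw [this]
  exact MeasurableSet.biUnion (Set.to_countable S) (fun f _ => hsing f)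

/-- Coordinate success probability. -/
def pr (βL βT : ℝ) {n : ℕ} (a : Finset (Fin n)) : ℝ :=
  if a.card = 2 then βL else if a.card = 3 then βT else 0

lemma sugm_eq (n : ℕ) (βL βT : ℝ) :
    sugm n βL βT = Measure.pi fun s => bern (pr βL βT s) := by
  unfold sugm pr
  congr 1; funext s; split_ifs <;> rfl

section Measures

variable {n : ℕ} {βL βT : ℝ}
variable (hL0 : 0 ≤ βL) (hL1 : βL ≤ 1) (hT0 : 0 ≤ βT) (hT1 : βT ≤ 1)

include hL0 hL1 hT0 hT1 in
lemma pr_mem (a : Finset (Fin n)) : 0 ≤ pr βL βT a ∧ pr βL βT a ≤ 1 := by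
  unfold pr; split_ifs <;> constructor <;> linarith

include hL0 hL1 hT0 hT1 in
lemma box_measure (s : Finset (Finset (Fin n))) :
    sugm n βL βT {ω | ∀ a ∈ s, ω a = false} = ∏ a ∈ s, ENNReal.ofReal (1 - pr βL βT a) := by
  rw [sugm_eq]
  have hset : {ω : Finset (Fin n) → Bool | ∀ a ∈ s, ω a = false}
      = Set.pi Set.univ (fun a => if a ∈ s then ({false} : Set Bool) else Set.univ) := by
    ext ω; simp only [Set.mem_setOf_eq, Set.mem_pi, Set.mem_univ, forall_true_left]
    constructor
    · intro h a; split_ifs with ha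
      · simp [h a ha]
      · trivial
    · intro h a ha; have := h a; rw [if_pos ha] at this; simpa using this
  rw [hset, Measure.pi_pi]
  have : ∀ a : Finset (Fin n),
      (bern (pr βL βT a)) (if a ∈ s then ({false} : Set Bool) else Set.univ)
        = if a ∈ s then ENNReal.ofReal (1 - pr βL βT a) else 1 := by
    intro a
    obtain ⟨h0, h1⟩ := pr_mem hL0 hL1 hT0 hT1 a
    split_ifs with ha
    · exact bern_false _
    · exact bern_univ _ h0 h1
  simp only [this]
  rw [Finset.prod_ite_mem Finset.univ s (fun a => ENNReal.ofReal (1 - pr βL βT a)),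
    Finset.univ_inter]

include hL0 hL1 hT0 hT1 in
lemma single_true (t : Finset (Fin n)) :
    sugm n βL βT {ω | ω t = true} = ENNReal.ofReal (pr βL βT t) := by
  rw [sugm_eq]
  have hset : {ω : Finset (Fin n) → Bool | ω t = true}
      = Set.pi Set.univ (fun a => if a = t then ({true} : Set Bool) else Set.univ) := by
    ext ω; simp only [Set.mem_setOf_eq, Set.mem_pi, Set.mem_univ, forall_true_left]
    constructor
    · intro h a; split_ifs with ha
      · subst ha; simp [h]
      · trivial
    · intro h; have := h t; rw [if_pos rfl] at this; simpa using this
  rw [hset, Measure.pi_pi]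
  have : ∀ a : Finset (Fin n),
      (bern (pr βL βT a)) (if a = t then ({true} : Set Bool) else Set.univ)
        = if a = t then ENNReal.ofReal (pr βL βT a) else 1 := by
    intro a
    obtain ⟨h0, h1⟩ := pr_mem hL0 hL1 hT0 hT1 a
    split_ifs with ha
    · exact bern_true _
    · exact bern_univ _ h0 h1
  simp only [this]
  rw [Finset.prod_ite_eq' Finset.univ t (fun a => ENNReal.ofReal (pr βL βT a)),
    if_pos (Finset.mem_univ t)]

end Measures

/-- ENNReal cancellation helper. -/
lemma cancel {x : ENNReal} {a b : ℝ} (ha : 0 ≤ a) (hab : a ≤ b)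
    (h : x + ENNReal.ofReal a = ENNReal.ofReal b) : x = ENNReal.ofReal (b - a) := by
  have key : ENNReal.ofReal (b - a) + ENNReal.ofReal a = ENNReal.ofReal b := by
    rw [← ENNReal.ofReal_add (by linarith) ha]; ring_nf
  exact WithTop.add_right_cancel ENNReal.ofReal_ne_top (h.trans key.symm)

section Comb

variable {n : ℕ} {βL βT : ℝ}

/-- Nodes other than `a, b`. -/
def D (a b : Fin n) : Finset (Fin n) := univ \ {a, b}

/-- Triangle coordinates through the pair `{a, b}`. -/
def tri (a b : Fin n) : Finset (Finset (Fin n)) := (D a b).image (fun c => {a, b, c})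

/-- All coordinates affecting the observed edge `ab`. -/
def blk (a b : Fin n) : Finset (Finset (Fin n)) := insert {a, b} (tri a b)

lemma mem_D {a b c : Fin n} : c ∈ D a b ↔ c ≠ a ∧ c ≠ b := by
  simp [D, not_or]

lemma card_D (a b : Fin n) (hab : a ≠ b) : (D a b).card = n - 2 := by
  rw [D, card_sdiff_of_subset (subset_univ _), card_univ, Fintype.card_fin, card_pair hab]

lemma card_triple {a b c : Fin n} (hab : a ≠ b) (hca : c ≠ a) (hcb : c ≠ b) :
    ({a, b, c} : Finset (Fin n)).card = 3 := by
  rw [card_insert_of_notMem (by simp [hab, hca.symm]),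
    card_insert_of_notMem (by simp [hcb.symm]), card_singleton]

lemma triple_inj {a b c c' : Fin n} (hca : c ≠ a) (hcb : c ≠ b)
    (h : ({a, b, c} : Finset (Fin n)) = {a, b, c'}) : c = c' := by
  have : c ∈ ({a, b, c'} : Finset (Fin n)) := by
    rw [← h]; simp
  simp only [mem_insert, mem_singleton] at this
  tauto

lemma mem_tri_iff {a b : Fin n} {x : Finset (Fin n)} :
    x ∈ tri a b ↔ ∃ c, c ≠ a ∧ c ≠ b ∧ x = {a, b, c} := by
  simp only [tri, mem_image]
  constructor
  · rintro ⟨c, hc, rfl⟩; exact ⟨c, (mem_D.mp hc).1, (mem_D.mp hc).2, rfl⟩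
  · rintro ⟨c, h1, h2, rfl⟩; exact ⟨c, mem_D.mpr ⟨h1, h2⟩, rfl⟩

lemma card_of_mem_tri {a b : Fin n} (hab : a ≠ b) {x : Finset (Fin n)} (hx : x ∈ tri a b) :
    x.card = 3 := by
  obtain ⟨c, h1, h2, rfl⟩ := mem_tri_iff.mp hx
  exact card_triple hab h1 h2

lemma pair_notMem_tri {a b : Fin n} (hab : a ≠ b) : ({a, b} : Finset (Fin n)) ∉ tri a b := by
  intro h
  have := card_of_mem_tri hab h
  rw [card_pair hab] at this
  omega

lemma mem_blk_iff {a b : Fin n} {x : Finset (Fin n)} :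
    x ∈ blk a b ↔ x = {a, b} ∨ ∃ c, c ≠ a ∧ c ≠ b ∧ x = {a, b, c} := by
  simp [blk, mem_tri_iff]

lemma mem_blk_elems {a b : Fin n} (hab : a ≠ b) {x : Finset (Fin n)} (hx : x ∈ blk a b) :
    a ∈ x ∧ b ∈ x ∧ x.card ≤ 3 := by
  rcases mem_blk_iff.mp hx with rfl | ⟨c, h1, h2, rfl⟩
  · exact ⟨by simp, by simp, by rw [card_pair hab]; omega⟩
  · exact ⟨by simp, by simp, by rw [card_triple hab h1 h2]⟩

lemma tri_erase {a b e : Fin n} :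
    (tri a b).erase {a, b, e} = ((D a b).erase e).image (fun c => {a, b, c}) := by
  ext x
  simp only [mem_erase, mem_image, mem_tri_iff]
  constructor
  · rintro ⟨hne, c, h1, h2, rfl⟩
    exact ⟨c, ⟨fun hc => hne (by rw [hc]), mem_D.mpr ⟨h1, h2⟩⟩, rfl⟩
  · rintro ⟨c, hc, rfl⟩
    obtain ⟨hce, hcD⟩ := hc
    obtain ⟨h1, h2⟩ := mem_D.mp hcD
    refine ⟨fun h => hce (triple_inj h1 h2 h), c, h1, h2, rfl⟩

lemma pr_pair {a b : Fin n} (hab : a ≠ b) : pr βL βT ({a, b} : Finset (Fin n)) = βL := by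
  simp [pr, card_pair hab]

lemma pr_triple {a b c : Fin n} (hab : a ≠ b) (hca : c ≠ a) (hcb : c ≠ b) :
    pr βL βT ({a, b, c} : Finset (Fin n)) = βT := by
  simp [pr, card_triple hab hca hcb]

lemma prod_tri {a b : Fin n} (hab : a ≠ b) :
    ∏ x ∈ tri a b, ENNReal.ofReal (1 - pr βL βT x) = ENNReal.ofReal (1 - βT) ^ (n - 2) := by
  rw [tri, Finset.prod_image]
  · rw [← card_D a b hab, ← Finset.prod_const]
    apply Finset.prod_congr rfl
    intro c hc
    obtain ⟨h1, h2⟩ := mem_D.mp hc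
    rw [pr_triple hab h1 h2]
  · intro c hc c' _ h
    exact triple_inj (mem_D.mp hc).1 (mem_D.mp hc).2 h

lemma prod_blk {a b : Fin n} (hab : a ≠ b) :
    ∏ x ∈ blk a b, ENNReal.ofReal (1 - pr βL βT x)
      = ENNReal.ofReal (1 - βL) * ENNReal.ofReal (1 - βT) ^ (n - 2) := by
  rw [blk, Finset.prod_insert (pair_notMem_tri hab), pr_pair hab, prod_tri hab]

lemma prod_tri_erase {a b e : Fin n} (hab : a ≠ b) (hea : e ≠ a) (heb : e ≠ b) :
    ∏ x ∈ (tri a b).erase {a, b, e}, ENNReal.ofReal (1 - pr βL βT x)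
      = ENNReal.ofReal (1 - βT) ^ (n - 3) := by
  rw [tri_erase, Finset.prod_image]
  · have hcard : ((D a b).erase e).card = n - 3 := by
      rw [card_erase_of_mem (mem_D.mpr ⟨hea, heb⟩), card_D a b hab]
      omega
    rw [← hcard, ← Finset.prod_const]
    apply Finset.prod_congr rfl
    intro c hc
    obtain ⟨h1, h2⟩ := mem_D.mp (mem_of_mem_erase hc)
    rw [pr_triple hab h1 h2]
  · intro c hc c' _ h
    have hcD := mem_of_mem_erase hc
    exact triple_inj (mem_D.mp hcD).1 (mem_D.mp hcD).2 h

lemma prod_blk_erase {a b e : Fin n} (hab : a ≠ b) (hea : e ≠ a) (heb : e ≠ b) :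
    ∏ x ∈ (blk a b).erase {a, b, e}, ENNReal.ofReal (1 - pr βL βT x)
      = ENNReal.ofReal (1 - βL) * ENNReal.ofReal (1 - βT) ^ (n - 3) := by
  have hne : ({a, b} : Finset (Fin n)) ≠ {a, b, e} := by
    intro h
    have := card_triple hab hea heb
    rw [← h, card_pair hab] at this
    omega
  rw [blk, erase_insert_of_ne hne, Finset.prod_insert, pr_pair hab,
    prod_tri_erase hab hea heb]
  intro h
  exact pair_notMem_tri hab (mem_of_mem_erase h)

/-- Complement of the observed-edge event is a box. -/
lemma compl_edge (a b : Fin n) :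
    {ω : Finset (Fin n) → Bool | edgeObs ω a b = true}ᶜ
      = {ω | ∀ x ∈ blk a b, ω x = false} := by
  ext ω
  simp only [Set.mem_compl_iff, Set.mem_setOf_eq, edgeObs, Bool.or_eq_true,
    decide_eq_true_eq, not_or, not_exists]
  constructor
  · rintro ⟨h1, h2⟩ x hx
    rcases mem_blk_iff.mp hx with rfl | ⟨c, hc1, hc2, rfl⟩
    · exact Bool.not_eq_true _ |>.mp h1
    · have := h2 c
      push_neg at this
      exact Bool.not_eq_true _ |>.mp (this hc1 hc2)
  · intro h
    constructor
    · rw [h {a, b} (mem_blk_iff.mpr (Or.inl rfl))]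
      simp
    · intro c hc
      obtain ⟨hc1, hc2, hc3⟩ := hc
      rw [h {a, b, c} (mem_blk_iff.mpr (Or.inr ⟨c, hc1, hc2, rfl⟩))] at hc3
      exact Bool.false_ne_true hc3

lemma box_inter {s s' : Finset (Finset (Fin n))} :
    {ω : Finset (Fin n) → Bool | ∀ x ∈ s, ω x = false}
        ∩ {ω | ∀ x ∈ s', ω x = false}
      = {ω | ∀ x ∈ s ∪ s', ω x = false} := by
  ext ω
  simp only [Set.mem_inter_iff, Set.mem_setOf_eq, mem_union]
  constructor
  · rintro ⟨h1, h2⟩ x hx; rcases hx with hx | hx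
    · exact h1 x hx
    · exact h2 x hx
  · intro h
    exact ⟨fun x hx => h x (Or.inl hx), fun x hx => h x (Or.inr hx)⟩

end Comb

end Stmt4Aux

open Stmt4Aux Finset

set_option maxHeartbeats 2000000 in
theorem stmt4 (n : ℕ) (hn : 3 ≤ n) (βL βT : ℝ)
    (hβL : βL ∈ Set.Icc (0 : ℝ) 1) (hβT : βT ∈ Set.Icc (0 : ℝ) 1)
    (i j k : Fin n) (hij : i ≠ j) (hjk : j ≠ k) (hik : i ≠ k) :
    sugm n βL βT
        {ω | edgeObs ω i j = true ∧ edgeObs ω j k = true ∧ edgeObs ω i k = true} =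
      ENNReal.ofReal
        (βT + (1 - βT) * (βL + (1 - βL) * (1 - (1 - βT) ^ (n - 3))) ^ 3) := by
  obtain ⟨hL0, hL1⟩ := hβL
  obtain ⟨hT0, hT1⟩ := hβT
  have hki : k ≠ i := hik.symm
  have hkj : k ≠ j := hjk.symm
  have hji : j ≠ i := hij.symm
  -- the triple coordinate
  set t : Finset (Fin n) := {i, j, k} with ht
  have e2 : ({j, k, i} : Finset (Fin n)) = t := by ext x; simp [ht]; tauto
  have e3 : ({i, k, j} : Finset (Fin n)) = t := by ext x; simp [ht]; tauto
  have hcard_t : t.card = 3 := card_triple hij hki hkj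
  have htA : t ∈ blk i j := mem_blk_iff.mpr (Or.inr ⟨k, hki, hkj, rfl⟩)
  have htB : t ∈ blk j k := mem_blk_iff.mpr (Or.inr ⟨i, hij, hik, e2.symm⟩)
  have htC : t ∈ blk i k := mem_blk_iff.mpr (Or.inr ⟨j, hji, hjk, e3.symm⟩)
  have key : ∀ x : Finset (Fin n), i ∈ x → j ∈ x → k ∈ x → x.card ≤ 3 → x = t := by
    intro x hi' hj' hk' hc
    have hsub : t ⊆ x := by
      rw [ht]; intro y hy
      simp only [mem_insert, mem_singleton] at hy
      rcases hy with rfl | rfl | rfl <;> assumption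
    exact (Finset.eq_of_subset_of_card_le hsub (by rw [hcard_t]; exact hc)).symm
  -- sdiff identities
  have sBA : blk j k \ blk i j = (blk j k).erase t := by
    ext x
    simp only [mem_sdiff, mem_erase]
    constructor
    · rintro ⟨hx, hnx⟩
      exact ⟨fun h => hnx (h ▸ htA), hx⟩
    · rintro ⟨hne, hx⟩
      refine ⟨hx, fun hx' => hne ?_⟩
      obtain ⟨hj', hk', hc⟩ := mem_blk_elems hjk hx
      obtain ⟨hi', -, -⟩ := mem_blk_elems hij hx'
      exact key x hi' hj' hk' hc
  have sCA : blk i k \ blk i j = (blk i k).erase t := by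
    ext x
    simp only [mem_sdiff, mem_erase]
    constructor
    · rintro ⟨hx, hnx⟩
      exact ⟨fun h => hnx (h ▸ htA), hx⟩
    · rintro ⟨hne, hx⟩
      refine ⟨hx, fun hx' => hne ?_⟩
      obtain ⟨hi', hk', hc⟩ := mem_blk_elems hik hx
      obtain ⟨-, hj', -⟩ := mem_blk_elems hij hx'
      exact key x hi' hj' hk' hc
  have sCB : blk i k \ blk j k = (blk i k).erase t := by
    ext x
    simp only [mem_sdiff, mem_erase]
    constructor
    · rintro ⟨hx, hnx⟩
      exact ⟨fun h => hnx (h ▸ htB), hx⟩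
    · rintro ⟨hne, hx⟩
      refine ⟨hx, fun hx' => hne ?_⟩
      obtain ⟨hi', hk', hc⟩ := mem_blk_elems hik hx
      obtain ⟨hj', -, -⟩ := mem_blk_elems hjk hx'
      exact key x hi' hj' hk' hc
  have sC_AB : blk i k \ (blk i j ∪ blk j k) = (blk i k).erase t := by
    ext x
    simp only [mem_sdiff, mem_erase, mem_union, not_or]
    constructor
    · rintro ⟨hx, hnx, -⟩
      exact ⟨fun h => hnx (h ▸ htA), hx⟩
    · rintro ⟨hne, hx⟩
      obtain ⟨hi', hk', hc⟩ := mem_blk_elems hik hx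
      refine ⟨hx, fun hx' => hne ?_, fun hx' => hne ?_⟩
      · obtain ⟨-, hj', -⟩ := mem_blk_elems hij hx'
        exact key x hi' hj' hk' hc
      · obtain ⟨hj', -, -⟩ := mem_blk_elems hjk hx'
        exact key x hi' hj' hk' hc
  -- real bookkeeping
  have hq0 : (0:ℝ) ≤ 1 - βT := by linarith
  have hq1 : (1:ℝ) - βT ≤ 1 := by linarith
  set X : ℝ := (1 - βT) ^ (n - 3) with hX
  have hX0 : 0 ≤ X := pow_nonneg hq0 _
  have hX1 : X ≤ 1 := pow_le_one₀ hq0 hq1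
  set r : ℝ := (1 - βL) * X with hr
  have hr0 : 0 ≤ r := mul_nonneg (by linarith) hX0
  have hr1 : r ≤ 1 := by nlinarith
  -- ofReal conversions
  have hA : ENNReal.ofReal (1 - βL) * ENNReal.ofReal (1 - βT) ^ (n - 2)
      = ENNReal.ofReal ((1 - βT) * r) := by
    rw [← ENNReal.ofReal_pow hq0, ← ENNReal.ofReal_mul (by linarith)]
    congr 1
    rw [hr, hX, show n - 2 = (n - 3) + 1 from by omega, pow_succ]
    ring
  have hAe : ENNReal.ofReal (1 - βL) * ENNReal.ofReal (1 - βT) ^ (n - 3)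
      = ENNReal.ofReal r := by
    rw [← ENNReal.ofReal_pow hq0, ← ENNReal.ofReal_mul (by linarith)]
  -- products over blocks
  have prodAB : ∏ x ∈ blk i j ∪ blk j k, ENNReal.ofReal (1 - pr βL βT x)
      = ENNReal.ofReal ((1 - βT) * r * r) := by
    rw [← Finset.union_sdiff_self_eq_union, Finset.prod_union disjoint_sdiff, sBA,
      prod_blk hij, hA, ← e2, prod_blk_erase hjk hij hik, hAe,
      ← ENNReal.ofReal_mul (mul_nonneg hq0 hr0)]
  have prodAC : ∏ x ∈ blk i j ∪ blk i k, ENNReal.ofReal (1 - pr βL βT x)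
      = ENNReal.ofReal ((1 - βT) * r * r) := by
    rw [← Finset.union_sdiff_self_eq_union, Finset.prod_union disjoint_sdiff, sCA,
      prod_blk hij, hA, ← e3, prod_blk_erase hik hji hjk, hAe,
      ← ENNReal.ofReal_mul (mul_nonneg hq0 hr0)]
  have prodBC : ∏ x ∈ blk j k ∪ blk i k, ENNReal.ofReal (1 - pr βL βT x)
      = ENNReal.ofReal ((1 - βT) * r * r) := by
    rw [← Finset.union_sdiff_self_eq_union, Finset.prod_union disjoint_sdiff, sCB,
      prod_blk hjk, hA, ← e3, prod_blk_erase hik hji hjk, hAe,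
      ← ENNReal.ofReal_mul (mul_nonneg hq0 hr0)]
  have prodABC : ∏ x ∈ blk i j ∪ blk j k ∪ blk i k, ENNReal.ofReal (1 - pr βL βT x)
      = ENNReal.ofReal ((1 - βT) * r * r * r) := by
    rw [← Finset.union_sdiff_self_eq_union, Finset.prod_union disjoint_sdiff, sC_AB,
      prodAB, ← e3, prod_blk_erase hik hji hjk, hAe,
      ← ENNReal.ofReal_mul (mul_nonneg (mul_nonneg hq0 hr0) hr0)]
  -- the events
  set A : Set (Finset (Fin n) → Bool) := {ω | edgeObs ω i j = true} with hAdef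
  set B : Set (Finset (Fin n) → Bool) := {ω | edgeObs ω j k = true} with hBdef
  set C : Set (Finset (Fin n) → Bool) := {ω | edgeObs ω i k = true} with hCdef
  set N : Set (Finset (Fin n) → Bool) := {ω | ω t = false} with hNdef
  set T : Set (Finset (Fin n) → Bool) := {ω | ω t = true} with hTdef
  -- measures of boxes
  have mT : sugm n βL βT T = ENNReal.ofReal βT := by
    rw [hTdef, single_true hL0 hL1 hT0 hT1, ht, pr_triple hij hki hkj]
  have mN : sugm n βL βT N = ENNReal.ofReal (1 - βT) := by
    have hset : N = {ω | ∀ a ∈ ({t} : Finset (Finset (Fin n))), ω a = false} := by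
      ext ω; simp [hNdef]
    rw [hset, box_measure hL0 hL1 hT0 hT1, Finset.prod_singleton, ht,
      pr_triple hij hki hkj]
  have mAc : sugm n βL βT Aᶜ = ENNReal.ofReal ((1 - βT) * r) := by
    rw [hAdef, compl_edge, box_measure hL0 hL1 hT0 hT1, prod_blk hij, hA]
  have mBc : sugm n βL βT Bᶜ = ENNReal.ofReal ((1 - βT) * r) := by
    rw [hBdef, compl_edge, box_measure hL0 hL1 hT0 hT1, prod_blk hjk, hA]
  have mCc : sugm n βL βT Cᶜ = ENNReal.ofReal ((1 - βT) * r) := by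
    rw [hCdef, compl_edge, box_measure hL0 hL1 hT0 hT1, prod_blk hik, hA]
  have mAB : sugm n βL βT (Aᶜ ∩ Bᶜ) = ENNReal.ofReal ((1 - βT) * r * r) := by
    rw [hAdef, hBdef, compl_edge, compl_edge, box_inter,
      box_measure hL0 hL1 hT0 hT1, prodAB]
  have mAC : sugm n βL βT (Aᶜ ∩ Cᶜ) = ENNReal.ofReal ((1 - βT) * r * r) := by
    rw [hAdef, hCdef, compl_edge, compl_edge, box_inter,
      box_measure hL0 hL1 hT0 hT1, prodAC]
  have mBC : sugm n βL βT (Bᶜ ∩ Cᶜ) = ENNReal.ofReal ((1 - βT) * r * r) := by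
    rw [hBdef, hCdef, compl_edge, compl_edge, box_inter,
      box_measure hL0 hL1 hT0 hT1, prodBC]
  have mABC : sugm n βL βT (Aᶜ ∩ Bᶜ ∩ Cᶜ) = ENNReal.ofReal ((1 - βT) * r * r * r) := by
    rw [hAdef, hBdef, hCdef, compl_edge, compl_edge, compl_edge, box_inter, box_inter,
      box_measure hL0 hL1 hT0 hT1, prodABC]
  -- subset facts
  have hAcN : Aᶜ ⊆ N := by
    rw [hAdef, compl_edge]
    intro ω hω
    exact hω t htA
  have hBcN : Bᶜ ⊆ N := by
    rw [hBdef, compl_edge]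
    intro ω hω
    exact hω t htB
  have hCcN : Cᶜ ⊆ N := by
    rw [hCdef, compl_edge]
    intro ω hω
    exact hω t htC
  have hTsub : T ⊆ A ∩ B ∩ C := by
    intro ω hω
    simp only [hTdef, Set.mem_setOf_eq] at hω
    refine ⟨⟨?_, ?_⟩, ?_⟩
    · simp only [hAdef, Set.mem_setOf_eq, edgeObs, Bool.or_eq_true, decide_eq_true_eq]
      exact Or.inr ⟨k, hki, hkj, by rw [← ht]; exact hω⟩
    · simp only [hBdef, Set.mem_setOf_eq, edgeObs, Bool.or_eq_true, decide_eq_true_eq]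
      exact Or.inr ⟨i, hij, hik, by rw [e2]; exact hω⟩
    · simp only [hCdef, Set.mem_setOf_eq, edgeObs, Bool.or_eq_true, decide_eq_true_eq]
      exact Or.inr ⟨j, hji, hjk, by rw [e3]; exact hω⟩
  -- decomposition
  set S : Set (Finset (Fin n) → Bool) := A ∩ B ∩ C with hSdef
  have hgoal : {ω : Finset (Fin n) → Bool |
      edgeObs ω i j = true ∧ edgeObs ω j k = true ∧ edgeObs ω i k = true} = S := by
    ext ω
    simp only [hSdef, hAdef, hBdef, hCdef, Set.mem_setOf_eq, Set.mem_inter_iff]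
    tauto
  have d1 : sugm n βL βT (S ∩ T) + sugm n βL βT (S \ T) = sugm n βL βT S :=
    measure_inter_add_diff S (measSet T)
  have hST : S ∩ T = T := Set.inter_eq_right.mpr hTsub
  have hSd : S \ T = S ∩ N := by
    ext ω
    simp only [Set.mem_diff, Set.mem_inter_iff, hTdef, hNdef, Set.mem_setOf_eq,
      Bool.not_eq_true]
  have d2 : sugm n βL βT (N ∩ S) + sugm n βL βT (N \ S) = sugm n βL βT N :=
    measure_inter_add_diff N (measSet S)
  have hNd : N \ S = Aᶜ ∪ Bᶜ ∪ Cᶜ := by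
    ext ω
    constructor
    · rintro ⟨-, hnS⟩
      by_contra hcon
      simp only [Set.mem_union, Set.mem_compl_iff, not_or, not_not] at hcon
      exact hnS ⟨⟨hcon.1.1, hcon.1.2⟩, hcon.2⟩
    · intro hu
      have hN : ω ∈ N := by
        rcases hu with (h | h) | h
        · exact hAcN h
        · exact hBcN h
        · exact hCcN h
      refine ⟨hN, fun hS => ?_⟩
      rcases hu with (h | h) | h
      · exact h hS.1.1
      · exact h hS.1.2
      · exact h hS.2
  -- inclusion-exclusion
  have hvA0 : (0:ℝ) ≤ (1 - βT) * r := mul_nonneg hq0 hr0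
  have hv20 : (0:ℝ) ≤ (1 - βT) * r * r := mul_nonneg hvA0 hr0
  have hv30 : (0:ℝ) ≤ (1 - βT) * r * r * r := mul_nonneg hv20 hr0
  have u2 : sugm n βL βT (Aᶜ ∪ Bᶜ)
      = ENNReal.ofReal ((1 - βT) * r + (1 - βT) * r - (1 - βT) * r * r) := by
    have h := measure_union_add_inter (μ := sugm n βL βT) Aᶜ (measSet Bᶜ)
    rw [mAB, mAc, mBc, ← ENNReal.ofReal_add hvA0 hvA0] at h
    exact cancel hv20 (by nlinarith) h
  have u2' : sugm n βL βT ((Aᶜ ∩ Cᶜ) ∪ (Bᶜ ∩ Cᶜ))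
      = ENNReal.ofReal ((1 - βT) * r * r + (1 - βT) * r * r - (1 - βT) * r * r * r) := by
    have h := measure_union_add_inter (μ := sugm n βL βT) (Aᶜ ∩ Cᶜ) (measSet (Bᶜ ∩ Cᶜ))
    have hint : (Aᶜ ∩ Cᶜ) ∩ (Bᶜ ∩ Cᶜ) = Aᶜ ∩ Bᶜ ∩ Cᶜ := by
      ext ω; simp only [Set.mem_inter_iff]; tauto
    rw [hint, mABC, mAC, mBC, ← ENNReal.ofReal_add hv20 hv20] at h
    exact cancel hv30 (by nlinarith) h
  have u3 : sugm n βL βT (Aᶜ ∪ Bᶜ ∪ Cᶜ)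
      = ENNReal.ofReal ((1 - βT) * r + (1 - βT) * r - (1 - βT) * r * r + (1 - βT) * r
          - ((1 - βT) * r * r + (1 - βT) * r * r - (1 - βT) * r * r * r)) := by
    have h := measure_union_add_inter (μ := sugm n βL βT) (Aᶜ ∪ Bᶜ) (measSet Cᶜ)
    rw [Set.union_inter_distrib_right, u2', u2, mCc,
      ← ENNReal.ofReal_add (by nlinarith) hvA0] at h
    exact cancel (by nlinarith) (by nlinarith) h
  -- assemble
  have h1r : (0:ℝ) ≤ 1 - r := by linarith
  have hint1 : (0:ℝ) ≤ (1 - βT) * r * ((1 - r) * (1 - r)) :=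
    mul_nonneg (mul_nonneg hq0 hr0) (mul_nonneg h1r h1r)
  have hint2 : (0:ℝ) ≤ (1 - βT) * r * (1 - r) := mul_nonneg (mul_nonneg hq0 hr0) h1r
  have hint3 : (0:ℝ) ≤ (1 - βT) * ((1 - r) * ((1 - r) * (1 - r))) :=
    mul_nonneg hq0 (mul_nonneg h1r (mul_nonneg h1r h1r))
  have wval : sugm n βL βT (S ∩ N)
      = ENNReal.ofReal ((1 - βT)
          - ((1 - βT) * r + (1 - βT) * r - (1 - βT) * r * r + (1 - βT) * r
            - ((1 - βT) * r * r + (1 - βT) * r * r - (1 - βT) * r * r * r))) := by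
    rw [Set.inter_comm S N]
    rw [hNd, u3, mN] at d2
    exact cancel (by nlinarith [hint1, hint2, hvA0]) (by nlinarith [hint3]) d2
  rw [hgoal, ← d1, hST, hSd, mT, wval,
    ← ENNReal.ofReal_add hT0 (by nlinarith [hint3])]
  congr 1
  rw [hr]
  ring
end

section
/- Let n ≥ 3 and consider the links-and-triangles SUGM on n nodes with parameters β_L ∈ [0,1) and β_T ∈ [0,1). Fix two distinct nodes i and j and let U be the event that i and j have no common neighbor in the observed graph, i.e. there is no node h ∉ {i,j} with g_ih = g_jh = 1. Then U has positive probability and the conditional probability that g_ij = 1 given U equals β_L. -/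
open MeasureTheory

/-- The event that `i` and `j` have no common neighbor in the observed graph. -/
def noCommonNeighbor {n : ℕ} (i j : Fin n) : Set (Finset (Fin n) → Bool) :=
  {ω | ∀ h : Fin n, h ≠ i → h ≠ j → ¬(edgeObs ω i h = true ∧ edgeObs ω j h = true)}

lemma bern_apply_true (p : ℝ) : bern p {true} = ENNReal.ofReal p := by
  simp [bern]

lemma bern_apply_false (p : ℝ) : bern p {false} = ENNReal.ofReal (1 - p) := by
  simp [bern]

lemma bern_univ (p : ℝ) : bern p Set.univ = ENNReal.ofReal p + ENNReal.ofReal (1 - p) := by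
  simp [bern]

instance bern_finite (p : ℝ) : IsFiniteMeasure (bern p) :=
  ⟨by rw [bern_univ]; exact ENNReal.add_lt_top.2 ⟨ENNReal.ofReal_lt_top, ENNReal.ofReal_lt_top⟩⟩

lemma measure_eq_sum_singletons {α : Type*} [Fintype α] [MeasurableSpace α]
    [MeasurableSingletonClass α] (μ : Measure α) (A : Set α) :
    μ A = ∑ a ∈ (Set.toFinite A).toFinset, μ {a} := by
  rw [← measure_biUnion_finset ?_ (fun a _ => measurableSet_singleton a)]
  · congr 1; ext x; simp
  · intro x _ y _ hxy
    simp [Function.onFun, Set.disjoint_singleton, hxy]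

/-- In the links-and-triangles SUGM on `n ≥ 3` nodes with parameters
`βL, βT ∈ [0,1)`, for distinct nodes `i ≠ j`, the event `U` that `i` and `j` have no
common neighbor in the observed graph has positive probability, and the conditional
probability that the edge `ij` is present given `U` equals `βL`. -/
theorem stmt5 (n : ℕ) (hn : 3 ≤ n) (βL βT : ℝ)
    (hβL : βL ∈ Set.Ico (0 : ℝ) 1) (hβT : βT ∈ Set.Ico (0 : ℝ) 1)
    (i j : Fin n) (hij : i ≠ j) :
    0 < sugm n βL βT (noCommonNeighbor i j) ∧
      ProbabilityTheory.cond (sugm n βL βT) (noCommonNeighbor i j)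
          {ω | edgeObs ω i j = true} =
        ENNReal.ofReal βL := by
  classical
  obtain ⟨hL0, hL1⟩ := hβL
  obtain ⟨hT0, hT1⟩ := hβT
  set m : Finset (Fin n) → Measure Bool :=
    fun s => if s.card = 2 then bern βL else if s.card = 3 then bern βT else bern 0 with hm
  haveI hmfin : ∀ s, IsFiniteMeasure (m s) := by
    intro s; rw [hm]; dsimp only; split_ifs <;> infer_instance
  haveI : ∀ s, SigmaFinite (m s) := fun s => inferInstance
  have hsugm : sugm n βL βT = Measure.pi m := rfl
  set μ := sugm n βL βT with hμdef
  set U := noCommonNeighbor i j with hU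
  set e : Finset (Fin n) := {i, j} with he
  have hecard : e.card = 2 := by
    rw [he, Finset.card_insert_of_notMem (by simp [hij]), Finset.card_singleton]
  have hme_true : m e {true} = ENNReal.ofReal βL := by
    rw [hm]; simp [hecard, bern_apply_true]
  have hme_false : m e {false} = ENNReal.ofReal (1 - βL) := by
    rw [hm]; simp [hecard, bern_apply_false]
  -- singleton measures
  have hsingle : ∀ ω : Finset (Fin n) → Bool, μ {ω} = ∏ s, m s {ω s} := by
    intro ω
    show (Measure.pi m) {ω} = _
    rw [← Set.univ_pi_singleton ω, Measure.pi_pi]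
  have hμsum : ∀ A : Set (Finset (Fin n) → Bool),
      μ A = ∑ ω ∈ (Set.toFinite A).toFinset, ∏ s, m s {ω s} := by
    intro A
    rw [measure_eq_sum_singletons μ A]
    exact Finset.sum_congr rfl fun ω _ => hsingle ω
  -- card-3 sets are not e
  have htriple_ne : ∀ (a b c : Fin n), a ≠ b → c ≠ a → c ≠ b →
      ({a, b, c} : Finset (Fin n)) ≠ e := by
    intro a b c hab hca hcb hEq
    have : ({a, b, c} : Finset (Fin n)).card = 3 :=
      Finset.card_eq_three.mpr ⟨a, b, c, hab, hca.symm, hcb.symm, rfl⟩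
    rw [hEq, hecard] at this
    exact (by norm_num : (2 : ℕ) ≠ 3) this
  -- edgeObs is insensitive to the value at e, for pairs other than (i,j)
  have hedge_update : ∀ (ω : Finset (Fin n) → Bool) (b : Bool) (a h : Fin n),
      ({a, h} : Finset (Fin n)) ≠ e → a ≠ h →
      edgeObs (Function.update ω e b) a h = edgeObs ω a h := by
    intro ω b a h hne hah
    unfold edgeObs
    rw [Function.update_of_ne hne]
    congr 1
    simp only [decide_eq_decide]
    constructor <;> rintro ⟨k, hk1, hk2, hk3⟩ <;> refine ⟨k, hk1, hk2, ?_⟩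
    · rwa [Function.update_of_ne (htriple_ne a h k hah hk1 hk2)] at hk3
    · rwa [Function.update_of_ne (htriple_ne a h k hah hk1 hk2)]
  have hpair_i : ∀ h : Fin n, h ≠ j → ({i, h} : Finset (Fin n)) ≠ e := by
    intro h hhj hEq
    have hmem : h ∈ ({i, j} : Finset (Fin n)) := by rw [← he, ← hEq]; simp
    simp only [Finset.mem_insert, Finset.mem_singleton] at hmem
    rcases hmem with h1 | h1
    · have := hecard; rw [← hEq, h1] at this; simp at this
    · exact hhj h1
  have hpair_j : ∀ h : Fin n, h ≠ i → ({j, h} : Finset (Fin n)) ≠ e := by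
    intro h hhi hEq
    have hmem : h ∈ ({i, j} : Finset (Fin n)) := by rw [← he, ← hEq]; simp
    simp only [Finset.mem_insert, Finset.mem_singleton] at hmem
    rcases hmem with h1 | h1
    · exact hhi h1
    · have := hecard; rw [← hEq, h1] at this; simp at this
  -- U is insensitive to the value at e
  have hU_update : ∀ (ω : Finset (Fin n) → Bool) (b : Bool), ω ∈ U → Function.update ω e b ∈ U := by
    intro ω b hω h hhi hhj
    rw [hedge_update ω b i h (hpair_i h hhj) (Ne.symm hhi),
        hedge_update ω b j h (hpair_j h hhi) (Ne.symm hhj)]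
    exact hω h hhi hhj
  -- on U, the observed edge ij is present iff the direct link formed
  have hEdgeU : ∀ ω ∈ U, (edgeObs ω i j = true ↔ ω e = true) := by
    intro ω hω
    constructor
    · intro hEdge
      unfold edgeObs at hEdge
      rcases Bool.or_eq_true_iff.mp hEdge with h1 | h1
      · exact h1
      · exfalso
        obtain ⟨k, hki, hkj, hk⟩ := of_decide_eq_true h1
        refine hω k hki hkj ⟨?_, ?_⟩
        · unfold edgeObs
          refine Bool.or_eq_true_iff.mpr (Or.inr (decide_eq_true ?_))
          refine ⟨j, Ne.symm hij, Ne.symm hkj, ?_⟩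
          have : ({i, k, j} : Finset (Fin n)) = {i, j, k} := by
            ext x; simp; tauto
          rwa [this]
        · unfold edgeObs
          refine Bool.or_eq_true_iff.mpr (Or.inr (decide_eq_true ?_))
          refine ⟨i, hij, Ne.symm hki, ?_⟩
          have : ({j, k, i} : Finset (Fin n)) = {i, j, k} := by
            ext x; simp; tauto
          rwa [this]
    · intro hE
      unfold edgeObs
      rw [← he, hE]
      simp
  -- split off the coordinate e from the product
  set g : (Finset (Fin n) → Bool) → ENNReal :=
    fun ω => ∏ s ∈ Finset.univ.erase e, m s {ω s} with hg
  have hw_split : ∀ ω : Finset (Fin n) → Bool, ∏ s, m s {ω s} = m e {ω e} * g ω := by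
    intro ω
    rw [hg]
    exact (Finset.mul_prod_erase Finset.univ _ (Finset.mem_univ e)).symm
  have hg_update : ∀ (ω : Finset (Fin n) → Bool) (b : Bool),
      g (Function.update ω e b) = g ω := by
    intro ω b
    refine Finset.prod_congr rfl fun s hs => ?_
    rw [Function.update_of_ne (Finset.ne_of_mem_erase hs)]
  set Ut := (Set.toFinite U).toFinset.filter (fun ω => ω e = true) with hUt
  set Uf := (Set.toFinite U).toFinset.filter (fun ω => ¬ ω e = true) with hUf
  set S : ENNReal := ∑ ω ∈ Uf, g ω with hS
  have hsum_eq : ∑ ω ∈ Ut, g ω = S := by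
    rw [hS]
    refine Finset.sum_nbij' (fun ω => Function.update ω e false)
      (fun ω => Function.update ω e true) ?_ ?_ ?_ ?_ ?_
    · intro a ha
      rw [hUt, Finset.mem_filter, Set.Finite.mem_toFinset] at ha
      rw [hUf, Finset.mem_filter, Set.Finite.mem_toFinset]
      exact ⟨hU_update a false ha.1, by simp⟩
    · intro a ha
      rw [hUf, Finset.mem_filter, Set.Finite.mem_toFinset] at ha
      rw [hUt, Finset.mem_filter, Set.Finite.mem_toFinset]
      exact ⟨hU_update a true ha.1, by simp⟩
    · intro a ha
      rw [hUt, Finset.mem_filter] at ha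
      show Function.update (Function.update a e false) e true = a
      rw [Function.update_idem, ← ha.2, Function.update_eq_self]
    · intro a ha
      rw [hUf, Finset.mem_filter] at ha
      have h2 : a e = false := by simpa using ha.2
      show Function.update (Function.update a e true) e false = a
      rw [Function.update_idem, ← h2, Function.update_eq_self]
    · intro a _
      exact (hg_update a false).symm
  have hsum_t : ∑ ω ∈ Ut, ∏ s, m s {ω s} = ENNReal.ofReal βL * S := by
    calc ∑ ω ∈ Ut, ∏ s, m s {ω s} = ∑ ω ∈ Ut, ENNReal.ofReal βL * g ω := by
          refine Finset.sum_congr rfl fun ω hω => ?_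
          rw [hUt, Finset.mem_filter] at hω
          rw [hw_split, hω.2, hme_true]
      _ = ENNReal.ofReal βL * ∑ ω ∈ Ut, g ω := (Finset.mul_sum _ _ _).symm
      _ = _ := by rw [hsum_eq]
  have hsum_f : ∑ ω ∈ Uf, ∏ s, m s {ω s} = ENNReal.ofReal (1 - βL) * S := by
    calc ∑ ω ∈ Uf, ∏ s, m s {ω s} = ∑ ω ∈ Uf, ENNReal.ofReal (1 - βL) * g ω := by
          refine Finset.sum_congr rfl fun ω hω => ?_
          rw [hUf, Finset.mem_filter] at hω
          have h2 : ω e = false := by simpa using hω.2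
          rw [hw_split, h2, hme_false]
      _ = ENNReal.ofReal (1 - βL) * ∑ ω ∈ Uf, g ω := (Finset.mul_sum _ _ _).symm
      _ = _ := by rw [hS]
  have hμU : μ U = S := by
    rw [hμsum U,
      ← Finset.sum_filter_add_sum_filter_not (Set.toFinite U).toFinset (fun ω => ω e = true),
      ← hUt, ← hUf, hsum_t, hsum_f, ← add_mul,
      ← ENNReal.ofReal_add hL0 (by linarith)]
    norm_num
  have hμUE : μ (U ∩ {ω | edgeObs ω i j = true}) = ENNReal.ofReal βL * S := by
    rw [hμsum _]
    refine Eq.trans ?_ hsum_t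
    refine Finset.sum_congr ?_ (fun _ _ => rfl)
    ext ω
    rw [hUt, Finset.mem_filter, Set.Finite.mem_toFinset, Set.Finite.mem_toFinset,
      Set.mem_inter_iff]
    constructor
    · rintro ⟨h1, h2⟩; exact ⟨h1, (hEdgeU ω h1).mp h2⟩
    · rintro ⟨h1, h2⟩; exact ⟨h1, (hEdgeU ω h1).mpr h2⟩
  have hUmeas : MeasurableSet U := (Set.to_countable U).measurableSet
  have hμU_pos : 0 < μ U := by
    have hmem : (fun _ => false : Finset (Fin n) → Bool) ∈ U := by
      intro h hhi hhj
      simp [edgeObs]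
    calc (0 : ENNReal) < ∏ s, m s {(fun _ => false : Finset (Fin n) → Bool) s} := by
          refine pos_iff_ne_zero.mpr (Finset.prod_ne_zero_iff.mpr fun s _ => ?_)
          rw [hm]; dsimp only
          split_ifs
          · rw [bern_apply_false]; exact (ENNReal.ofReal_pos.mpr (by linarith)).ne'
          · rw [bern_apply_false]; exact (ENNReal.ofReal_pos.mpr (by linarith)).ne'
          · rw [bern_apply_false]; exact (ENNReal.ofReal_pos.mpr (by norm_num)).ne'
      _ = μ {(fun _ => false : Finset (Fin n) → Bool)} := (hsingle _).symm
      _ ≤ μ U := measure_mono (Set.singleton_subset_iff.mpr hmem)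
  have hμU_ne_top : μ U ≠ ⊤ := by
    have huniv : μ Set.univ = ∏ s, m s Set.univ := by
      show (Measure.pi m) Set.univ = _
      exact Measure.pi_univ m
    refine (lt_of_le_of_lt (measure_mono (Set.subset_univ U)) ?_).ne
    rw [huniv]
    exact ENNReal.prod_lt_top fun s _ => measure_lt_top _ _
  have hS_ne0 : S ≠ 0 := by rw [← hμU]; exact hμU_pos.ne'
  have hS_ne_top : S ≠ ⊤ := by rw [← hμU]; exact hμU_ne_top
  refine ⟨hμU_pos, ?_⟩
  rw [ProbabilityTheory.cond_apply hUmeas, hμUE, hμU, mul_comm (ENNReal.ofReal βL),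
    ← mul_assoc, ENNReal.inv_mul_cancel hS_ne0 hS_ne_top, one_mul]
end

section
/- Fix an integer n ≥ 3 and β_L ∈ (0,1). Then the function β_T ↦ β_T + (1−β_T)·(β_L + (1−β_L)(1−(1−β_T)^{n−3}))³ is strictly increasing on (0,1). Consequently the map (β_L, β_T) ↦ (β_L, β_T + (1−β_T)·q̃_L(β_L,β_T)³), where q̃_L(β_L,β_T) = β_L + (1−β_L)(1−(1−β_T)^{n−3}), is injective on (0,1)². -/
/-- Fix `n ≥ 3` and `βL ∈ (0,1)`.  The function
`βT ↦ βT + (1-βT) * (βL + (1-βL)*(1-(1-βT)^(n-3)))³` is strictly increasing on `(0,1)`;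
consequently `(βL, βT) ↦ (βL, βT + (1-βT) * q̃L(βL,βT)³)` is injective on `(0,1)²`. -/
theorem stmt6 (n : ℕ) (hn : 3 ≤ n) :
    (∀ βL : ℝ, βL ∈ Set.Ioo (0 : ℝ) 1 →
      StrictMonoOn
        (fun βT : ℝ => βT + (1 - βT) * (βL + (1 - βL) * (1 - (1 - βT) ^ (n - 3))) ^ 3)
        (Set.Ioo (0 : ℝ) 1)) ∧
    Set.InjOn
      (fun β : ℝ × ℝ =>
        (β.1, β.2 + (1 - β.2) * (β.1 + (1 - β.1) * (1 - (1 - β.2) ^ (n - 3))) ^ 3))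
      (Set.Ioo (0 : ℝ) 1 ×ˢ Set.Ioo (0 : ℝ) 1) := by
  have key : ∀ βL : ℝ, βL ∈ Set.Ioo (0 : ℝ) 1 →
      StrictMonoOn
        (fun βT : ℝ => βT + (1 - βT) * (βL + (1 - βL) * (1 - (1 - βT) ^ (n - 3))) ^ 3)
        (Set.Ioo (0 : ℝ) 1) := by
    rintro βL ⟨hL0, hL1⟩ x ⟨hx0, hx1⟩ y ⟨hy0, hy1⟩ hxy
    simp only
    set qx := βL + (1 - βL) * (1 - (1 - x) ^ (n - 3)) with hqx
    set qy := βL + (1 - βL) * (1 - (1 - y) ^ (n - 3)) with hqy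
    have hsy : 0 < (1 - y) ^ (n - 3) := pow_pos (by linarith) _
    have hsx1 : (1 - x) ^ (n - 3) ≤ 1 := pow_le_one₀ (by linarith) (by linarith)
    have hsle : (1 - y) ^ (n - 3) ≤ (1 - x) ^ (n - 3) :=
      pow_le_pow_left₀ (by linarith) (by linarith) _
    have hqx0 : 0 ≤ qx := by nlinarith
    have hqy1 : qy < 1 := by nlinarith
    have hle : qx ≤ qy := by nlinarith
    have hqy3 : qy ^ 3 < 1 := pow_lt_one₀ (le_trans hqx0 hle) hqy1 (by norm_num)
    have hqcube : qx ^ 3 ≤ qy ^ 3 := pow_le_pow_left₀ hqx0 hle 3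
    have h3 : (1 - y) * (1 - qy ^ 3) < (1 - x) * (1 - qx ^ 3) := by
      have h1 : (1 - y) * (1 - qy ^ 3) < (1 - x) * (1 - qy ^ 3) := by nlinarith
      have h2 : (1 - x) * (1 - qy ^ 3) ≤ (1 - x) * (1 - qx ^ 3) := by nlinarith
      linarith
    nlinarith [h3]
  refine ⟨key, ?_⟩
  rintro ⟨a, b⟩ ⟨ha, hb⟩ ⟨c, d⟩ ⟨hc, hd⟩ heq
  simp only [Prod.mk.injEq] at heq
  obtain ⟨hac, h2⟩ := heq
  subst hac
  have := (key a ha).injOn hb hd h2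
  simpa using this
end

section
/- Let n ≥ 3 and consider the links-and-triangles SUGM on n nodes with parameters (β_L, β_T) ∈ [0,1]². For any three distinct nodes i, j, k, the covariance of the edge indicators g_ij and g_jk (two edges sharing the node j) equals β_T(1−β_T)(1−q̃_L)², where q̃_L = β_L + (1−β_L)(1−(1−β_T)^{n−3}). -/
open MeasureTheory

/-- The real-valued indicator of the observed edge `ij`. -/
noncomputable def edgeInd {n : ℕ} (i j : Fin n) (ω : Finset (Fin n) → Bool) : ℝ :=
  if edgeObs ω i j = true then 1 else 0

/-- indicator of b = false -/
noncomputable def chi (b : Bool) : ℝ := if b then 0 else 1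

def Sset {n : ℕ} (i j : Fin n) : Finset (Finset (Fin n)) :=
  insert {i, j} ((({i, j} : Finset (Fin n))ᶜ).image fun k => {i, j, k})

lemma mem_Sset {n : ℕ} {i j : Fin n} {s : Finset (Fin n)} :
    s ∈ Sset i j ↔ s = {i, j} ∨ ∃ k, k ≠ i ∧ k ≠ j ∧ s = {i, j, k} := by
  simp [Sset, eq_comm, and_assoc]

lemma edgeInd_eq {n : ℕ} (i j : Fin n) (ω : Finset (Fin n) → Bool) :
    edgeInd i j ω = 1 - ∏ s ∈ Sset i j, chi (ω s) := by
  unfold edgeInd edgeObs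
  by_cases h : ω {i, j} = true ∨ ∃ k : Fin n, k ≠ i ∧ k ≠ j ∧ ω {i, j, k} = true
  · have hz : ∏ s ∈ Sset i j, chi (ω s) = 0 := by
      rcases h with h | ⟨k, hk1, hk2, hk⟩
      · exact Finset.prod_eq_zero (mem_Sset.2 (Or.inl rfl)) (by simp [chi, h])
      · exact Finset.prod_eq_zero (mem_Sset.2 (Or.inr ⟨k, hk1, hk2, rfl⟩)) (by simp [chi, hk])
    rw [hz]
    rcases h with h | h <;> simp [h]
  · push_neg at h
    obtain ⟨h1, h2⟩ := h
    have hz : ∏ s ∈ Sset i j, chi (ω s) = 1 := by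
      apply Finset.prod_eq_one
      intro s hs
      rcases mem_Sset.1 hs with rfl | ⟨k, hk1, hk2, rfl⟩
      · simp [chi, Bool.eq_false_iff.2 h1]
      · simp [chi, Bool.eq_false_iff.2 (h2 k hk1 hk2)]
    rw [hz]
    simp [Bool.eq_false_iff.2 h1]
    intro x hx1 hx2
    exact Bool.eq_false_iff.2 (h2 x hx1 hx2)

noncomputable def Ifun (n : ℕ) (βL βT : ℝ) (s : Finset (Fin n)) : ℝ :=
  ∫ b, chi b ∂(if s.card = 2 then bern βL else if s.card = 3 then bern βT else bern 0)

lemma integral_bern_chi {p : ℝ} (h0 : 0 ≤ p) (h1 : p ≤ 1) :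
    ∫ b, chi b ∂(bern p) = 1 - p := by
  haveI : IsFiniteMeasure (ENNReal.ofReal p • Measure.dirac true) := by
    constructor
    simp [Measure.smul_apply, ENNReal.ofReal_lt_top, ENNReal.mul_lt_top]
  haveI : IsFiniteMeasure (ENNReal.ofReal (1 - p) • Measure.dirac false) := by
    constructor
    simp [Measure.smul_apply, ENNReal.ofReal_lt_top, ENNReal.mul_lt_top]
  rw [bern, integral_add_measure (Integrable.of_finite) (Integrable.of_finite),
    integral_smul_measure, integral_smul_measure, integral_dirac, integral_dirac,
    ENNReal.toReal_ofReal h0, ENNReal.toReal_ofReal (by linarith : (0:ℝ) ≤ 1 - p)]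
  simp [chi]

lemma card_pair' {n : ℕ} {i j : Fin n} (hij : i ≠ j) : ({i, j} : Finset (Fin n)).card = 2 :=
  Finset.card_pair hij

lemma card_triple {n : ℕ} {i j k : Fin n} (hij : i ≠ j) (hik : i ≠ k) (hjk : j ≠ k) :
    ({i, j, k} : Finset (Fin n)).card = 3 := by
  rw [Finset.card_insert_of_notMem (by simp [hij, hik]),
    Finset.card_insert_of_notMem (by simp [hjk]), Finset.card_singleton]

lemma Ifun_Sset {n : ℕ} {βL βT : ℝ} (hL0 : 0 ≤ βL) (hL1 : βL ≤ 1) (h0 : 0 ≤ βT) (h1 : βT ≤ 1)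
    {i j : Fin n} (hij : i ≠ j)
    {s : Finset (Fin n)} (hs : s ∈ Sset i j) :
    Ifun n βL βT s = if s.card = 2 then 1 - βL else 1 - βT := by
  rcases mem_Sset.1 hs with rfl | ⟨k, hk1, hk2, rfl⟩
  · rw [Ifun, card_pair' hij]
    simp [integral_bern_chi hL0 hL1]
  · have hc : ({i, j, k} : Finset (Fin n)).card = 3 :=
      card_triple hij (Ne.symm hk1) (Ne.symm hk2)
    rw [Ifun, hc]
    simp [integral_bern_chi h0 h1]

lemma prod_Sset {n : ℕ} {βL βT : ℝ} (hL0 : 0 ≤ βL) (hL1 : βL ≤ 1) (h0 : 0 ≤ βT) (h1 : βT ≤ 1)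
    {i j : Fin n} (hij : i ≠ j) :
    ∏ s ∈ Sset i j, Ifun n βL βT s = (1 - βL) * (1 - βT) ^ (n - 2) := by
  have hnot : ({i, j} : Finset (Fin n)) ∉ (({i, j} : Finset (Fin n))ᶜ).image fun k => {i, j, k} := by
    intro h
    obtain ⟨k, hk, he⟩ := Finset.mem_image.1 h
    simp only [Finset.mem_compl, Finset.mem_insert, Finset.mem_singleton, not_or] at hk
    have : ({i, j, k} : Finset (Fin n)).card = 3 :=
      card_triple hij (fun h => hk.1 h.symm) (fun h => hk.2 h.symm)
    rw [he] at this
    rw [card_pair' hij] at this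
    omega
  rw [Sset, Finset.prod_insert hnot]
  have hinj : Set.InjOn (fun k : Fin n => ({i, j, k} : Finset (Fin n)))
      ((({i, j} : Finset (Fin n))ᶜ) : Finset (Fin n)) := by
    intro a ha b hb he
    simp only [Finset.coe_compl, Set.mem_compl_iff, Finset.mem_coe, Finset.mem_insert,
      Finset.mem_singleton, not_or] at ha hb
    have he' : ({i, j, a} : Finset (Fin n)) = {i, j, b} := he
    have : a ∈ ({i, j, b} : Finset (Fin n)) := he' ▸ (by simp)
    simp only [Finset.mem_insert, Finset.mem_singleton] at this
    rcases this with h | h | h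
    · exact absurd h ha.1
    · exact absurd h ha.2
    · exact h
  rw [Finset.prod_image hinj]
  have hval : ∀ k ∈ (({i, j} : Finset (Fin n))ᶜ), Ifun n βL βT {i, j, k} = 1 - βT := by
    intro k hk
    simp only [Finset.mem_compl, Finset.mem_insert, Finset.mem_singleton, not_or] at hk
    have hc : ({i, j, k} : Finset (Fin n)).card = 3 :=
      card_triple hij (fun h => hk.1 h.symm) (fun h => hk.2 h.symm)
    rw [Ifun_Sset hL0 hL1 h0 h1 hij (mem_Sset.2 (Or.inr ⟨k, fun h => hk.1 h, fun h => hk.2 h, rfl⟩)), hc]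
    simp
  rw [Finset.prod_congr rfl hval, Finset.prod_const,
    Finset.card_compl, card_pair' hij, Fintype.card_fin]
  congr 1
  rw [Ifun_Sset hL0 hL1 h0 h1 hij (mem_Sset.2 (Or.inl rfl)), card_pair' hij]
  simp

lemma triple_comm {n : ℕ} (i j k : Fin n) : ({j, k, i} : Finset (Fin n)) = {i, j, k} := by
  ext x; simp; tauto

lemma Sset_inter {n : ℕ} {i j k : Fin n} (hij : i ≠ j) (hjk : j ≠ k) (hik : i ≠ k) :
    Sset i j ∩ Sset j k = {({i, j, k} : Finset (Fin n))} := by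
  ext s
  simp only [Finset.mem_inter, Finset.mem_singleton, mem_Sset]
  constructor
  · rintro ⟨h1 | ⟨a, ha1, ha2, ha3⟩, h2 | ⟨b, hb1, hb2, hb3⟩⟩
    · exfalso
      have : i ∈ ({j, k} : Finset (Fin n)) := by rw [← h2, h1]; simp
      simp only [Finset.mem_insert, Finset.mem_singleton] at this
      tauto
    · exfalso
      have c1 : s.card = 2 := h1 ▸ card_pair' hij
      have c2 : s.card = 3 := hb3 ▸ card_triple hjk (Ne.symm hb1) (Ne.symm hb2)
      omega
    · exfalso
      have c1 : s.card = 3 := ha3 ▸ card_triple hij (Ne.symm ha1) (Ne.symm ha2)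
      have c2 : s.card = 2 := h2 ▸ card_pair' hjk
      omega
    · have hkmem : k ∈ s := by rw [hb3]; simp
      rw [ha3] at hkmem
      simp only [Finset.mem_insert, Finset.mem_singleton] at hkmem
      rcases hkmem with h | h | h
      · exact absurd h.symm hik
      · exact absurd h.symm hjk
      · rw [ha3, h]
  · rintro rfl
    refine ⟨Or.inr ⟨k, Ne.symm hik, Ne.symm hjk, rfl⟩, Or.inr ⟨i, hij, hik, (triple_comm i j k).symm⟩⟩

lemma integral_pi_prod {ι : Type*} [Fintype ι] (μ : ι → Measure Bool)
    [h : ∀ s, IsProbabilityMeasure (μ s)] (f : ι → Bool → ℝ) :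
    ∫ ω : ι → Bool, ∏ s, f s (ω s) ∂(Measure.pi μ) = ∏ s, ∫ b, f s b ∂(μ s) :=
  MeasureTheory.integral_fintype_prod_eq_prod (μ := μ) f

lemma bern_prob {p : ℝ} (h0 : 0 ≤ p) (h1 : p ≤ 1) : IsProbabilityMeasure (bern p) := by
  constructor
  simp [bern, ← ENNReal.ofReal_add h0 (by linarith : (0:ℝ) ≤ 1 - p)]

lemma coord_prob {βL βT : ℝ} (hL0 : 0 ≤ βL) (hL1 : βL ≤ 1) (hT0 : 0 ≤ βT) (hT1 : βT ≤ 1)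
    {n : ℕ} (s : Finset (Fin n)) :
    IsProbabilityMeasure (if s.card = 2 then bern βL else if s.card = 3 then bern βT else bern 0) := by
  split_ifs
  exacts [bern_prob hL0 hL1, bern_prob hT0 hT1, bern_prob le_rfl zero_le_one]

lemma integral_prod_chi {n : ℕ} {βL βT : ℝ} (hL0 : 0 ≤ βL) (hL1 : βL ≤ 1)
    (hT0 : 0 ≤ βT) (hT1 : βT ≤ 1) (S : Finset (Finset (Fin n))) :
    ∫ ω, (∏ s ∈ S, chi (ω s)) ∂(sugm n βL βT) = ∏ s ∈ S, Ifun n βL βT s := by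
  haveI := fun s : Finset (Fin n) => coord_prob hL0 hL1 hT0 hT1 (n := n) s
  have hfub := integral_pi_prod
    (fun s : Finset (Fin n) =>
      if s.card = 2 then bern βL else if s.card = 3 then bern βT else bern 0)
    (fun t b => if t ∈ S then chi b else (1:ℝ))
  rw [sugm]
  calc ∫ ω, (∏ s ∈ S, chi (ω s))
        ∂(Measure.pi fun s : Finset (Fin n) =>
            if s.card = 2 then bern βL else if s.card = 3 then bern βT else bern 0)
      = ∫ ω : Finset (Fin n) → Bool,
          ∏ s : Finset (Fin n), (fun t b => if t ∈ S then chi b else (1:ℝ)) s (ω s)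
          ∂(Measure.pi fun s : Finset (Fin n) =>
            if s.card = 2 then bern βL else if s.card = 3 then bern βT else bern 0) := by
        congr 1
        funext ω
        rw [Finset.prod_ite_mem Finset.univ S (fun s => chi (ω s)), Finset.univ_inter]
    _ = ∏ s : Finset (Fin n), ∫ b, (if s ∈ S then chi b else (1:ℝ))
          ∂(if s.card = 2 then bern βL else if s.card = 3 then bern βT else bern 0) :=
        by exact hfub
    _ = ∏ s ∈ S, Ifun n βL βT s := by
        rw [← Finset.univ_inter S, ← Finset.prod_ite_mem Finset.univ S (fun s => Ifun n βL βT s)]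
        apply Finset.prod_congr rfl
        intro s _
        by_cases hs : s ∈ S
        · have hs2 : s ∈ Finset.univ ∩ S := by simp [hs]
          simp only [hs, hs2, if_true]
          rfl
        · have hs2 : s ∉ Finset.univ ∩ S := by simp [hs]
          simp only [hs, hs2, if_false]
          have h1 : ({false, true} : Set Bool) = Set.univ := by ext b; cases b <;> simp
          simp only [integral_const]
          rw [probReal_univ, one_smul]

lemma prod_chi_mul {n : ℕ} {i j k : Fin n} (hij : i ≠ j) (hjk : j ≠ k) (hik : i ≠ k)
    (ω : Finset (Fin n) → Bool) :
    (∏ s ∈ Sset i j, chi (ω s)) * (∏ s ∈ Sset j k, chi (ω s))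
      = ∏ s ∈ Sset i j ∪ Sset j k, chi (ω s) := by
  have hPI := Finset.prod_union_inter (s₁ := Sset i j) (s₂ := Sset j k) (f := fun s => chi (ω s))
  rw [Sset_inter hij hjk hik, Finset.prod_singleton] at hPI
  have hin : ({i, j, k} : Finset (Fin n)) ∈ Sset i j :=
    mem_Sset.2 (Or.inr ⟨k, Ne.symm hik, Ne.symm hjk, rfl⟩)
  by_cases h : ω {i, j, k} = true
  · have hz : chi (ω ({i, j, k} : Finset (Fin n))) = 0 := by simp [chi, h]
    rw [Finset.prod_eq_zero hin hz, Finset.prod_eq_zero (Finset.mem_union_left _ hin) hz,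
      zero_mul]
  · have ho : chi (ω ({i, j, k} : Finset (Fin n))) = 1 := by
      simp [chi, Bool.eq_false_iff.2 h]
    rw [ho, mul_one] at hPI
    exact hPI.symm

/-- In the links-and-triangles SUGM on `n ≥ 3` nodes with parameters
`(βL, βT) ∈ [0,1]²`, for distinct nodes `i, j, k`, the covariance of the edge indicators
`g_ij` and `g_jk` equals `βT * (1-βT) * (1 - q̃L)²` with
`q̃L = βL + (1-βL)*(1-(1-βT)^(n-3))`. -/
theorem stmt7 (n : ℕ) (hn : 3 ≤ n) (βL βT : ℝ)
    (hβL : βL ∈ Set.Icc (0 : ℝ) 1) (hβT : βT ∈ Set.Icc (0 : ℝ) 1)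
    (i j k : Fin n) (hij : i ≠ j) (hjk : j ≠ k) (hik : i ≠ k) :
    (∫ ω, edgeInd i j ω * edgeInd j k ω ∂(sugm n βL βT)) -
        (∫ ω, edgeInd i j ω ∂(sugm n βL βT)) * (∫ ω, edgeInd j k ω ∂(sugm n βL βT)) =
      βT * (1 - βT) * (1 - (βL + (1 - βL) * (1 - (1 - βT) ^ (n - 3)))) ^ 2 := by
  obtain ⟨hL0, hL1⟩ := hβL
  obtain ⟨hT0, hT1⟩ := hβT
  haveI := fun s : Finset (Fin n) => coord_prob hL0 hL1 hT0 hT1 (n := n) s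
  haveI : IsProbabilityMeasure (sugm n βL βT) := by rw [sugm]; infer_instance
  set μ := sugm n βL βT with hμ
  set P1 := ∏ s ∈ Sset i j, Ifun n βL βT s with hP1def
  set P2 := ∏ s ∈ Sset j k, Ifun n βL βT s with hP2def
  set PU := ∏ s ∈ Sset i j ∪ Sset j k, Ifun n βL βT s with hPUdef
  have h1 : ∫ ω, edgeInd i j ω ∂μ = 1 - P1 := by
    simp_rw [edgeInd_eq]
    rw [integral_sub (integrable_const 1) Integrable.of_finite, integral_const, probReal_univ,
      one_smul, integral_prod_chi hL0 hL1 hT0 hT1]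
  have h2 : ∫ ω, edgeInd j k ω ∂μ = 1 - P2 := by
    simp_rw [edgeInd_eq]
    rw [integral_sub (integrable_const 1) Integrable.of_finite, integral_const, probReal_univ,
      one_smul, integral_prod_chi hL0 hL1 hT0 hT1]
  have hpt : ∀ ω, edgeInd i j ω * edgeInd j k ω =
      1 - (∏ s ∈ Sset i j, chi (ω s)) - (∏ s ∈ Sset j k, chi (ω s))
        + ∏ s ∈ Sset i j ∪ Sset j k, chi (ω s) := by
    intro ω
    rw [edgeInd_eq, edgeInd_eq, ← prod_chi_mul hij hjk hik ω]
    ring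
  have h3 : ∫ ω, edgeInd i j ω * edgeInd j k ω ∂μ = 1 - P1 - P2 + PU := by
    simp_rw [hpt]
    rw [integral_add (μ := μ)
        (f := fun ω => 1 - (∏ s ∈ Sset i j, chi (ω s)) - ∏ s ∈ Sset j k, chi (ω s))
        (g := fun ω => ∏ s ∈ Sset i j ∪ Sset j k, chi (ω s))
        Integrable.of_finite Integrable.of_finite,
      integral_sub (μ := μ)
        (f := fun ω => 1 - (∏ s ∈ Sset i j, chi (ω s)))
        (g := fun ω => ∏ s ∈ Sset j k, chi (ω s))
        Integrable.of_finite Integrable.of_finite,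
      integral_sub (μ := μ)
        (f := fun _ => (1:ℝ))
        (g := fun ω => ∏ s ∈ Sset i j, chi (ω s))
        (integrable_const 1) Integrable.of_finite,
      integral_const, probReal_univ,
      one_smul, integral_prod_chi hL0 hL1 hT0 hT1,
      integral_prod_chi hL0 hL1 hT0 hT1, integral_prod_chi hL0 hL1 hT0 hT1]
  rw [h1, h2, h3]
  have hIijk : Ifun n βL βT {i, j, k} = 1 - βT := by
    rw [Ifun, card_triple hij hik hjk]
    simp [integral_bern_chi hT0 hT1]
  have hrel : PU * (1 - βT) = P1 * P2 := by
    have := Finset.prod_union_inter (s₁ := Sset i j) (s₂ := Sset j k) (f := Ifun n βL βT)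
    rw [Sset_inter hij hjk hik, Finset.prod_singleton, hIijk] at this
    exact this
  have hP1 : P1 = (1 - βL) * (1 - βT) ^ (n - 2) := prod_Sset hL0 hL1 hT0 hT1 hij
  have hP2 : P2 = (1 - βL) * (1 - βT) ^ (n - 2) := prod_Sset hL0 hL1 hT0 hT1 hjk
  have hne : n - 2 = (n - 3) + 1 := by omega
  by_cases hT : βT = 1
  · have hin : ({i, j, k} : Finset (Fin n)) ∈ Sset i j ∪ Sset j k :=
      Finset.mem_union_left _ (mem_Sset.2 (Or.inr ⟨k, Ne.symm hik, Ne.symm hjk, rfl⟩))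
    have hPU0 : PU = 0 :=
      Finset.prod_eq_zero hin (by rw [hIijk, hT]; ring)
    have hP10 : P1 = 0 := by rw [hP1, hne, pow_succ, hT]; ring
    have hP20 : P2 = 0 := by rw [hP2, hne, pow_succ, hT]; ring
    rw [hPU0, hP10, hP20, hT]
    ring
  · have hx : (1 : ℝ) - βT ≠ 0 := sub_ne_zero.2 (fun h => hT h.symm)
    have hPU : PU = (1 - βL) ^ 2 * ((1 - βT) ^ (n - 3)) ^ 2 * (1 - βT) := by
      apply mul_right_cancel₀ hx
      rw [hrel, hP1, hP2, hne, pow_succ]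
      ring
    rw [hPU, hP1, hP2, hne, pow_succ]
    ring
end

section
/- Let f ∈ (0,1) and set π_L(same) = f² + (1−f)², π_L(diff) = 1 − π_L(same), π_T(same) = f³ + (1−f)³, π_T(diff) = 1 − π_T(same). Let P_L(same), P_L(diff), P_T(same), P_T(diff) be strictly positive reals, and define p_L(s) = P_L(s)²·π_L(s) and p_T(s) = P_T(s)³·π_T(s) for s ∈ {same, diff}. If p_T(diff)/p_T(same) < (p_L(diff)/p_L(same))^{3/2}, then P_T(diff)/P_T(same) < P_L(diff)/P_L(same). -/
/-- Let `f ∈ (0,1)`, `π_L(same) = f² + (1-f)²`, `π_L(diff) = 1 - π_L(same)`,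
`π_T(same) = f³ + (1-f)³`, `π_T(diff) = 1 - π_T(same)`; let `PLs, PLd, PTs, PTd > 0` and
set `p_L(s) = P_L(s)² π_L(s)`, `p_T(s) = P_T(s)³ π_T(s)`.  If
`p_T(diff)/p_T(same) < (p_L(diff)/p_L(same))^(3/2)` then `PTd/PTs < PLd/PLs`. -/
theorem stmt8 (f PLs PLd PTs PTd : ℝ) (hf : f ∈ Set.Ioo (0 : ℝ) 1)
    (hPLs : 0 < PLs) (hPLd : 0 < PLd) (hPTs : 0 < PTs) (hPTd : 0 < PTd)
    (h : (PTd ^ 3 * (1 - (f ^ 3 + (1 - f) ^ 3))) / (PTs ^ 3 * (f ^ 3 + (1 - f) ^ 3)) <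
        ((PLd ^ 2 * (1 - (f ^ 2 + (1 - f) ^ 2))) / (PLs ^ 2 * (f ^ 2 + (1 - f) ^ 2))) ^
          ((3 : ℝ) / 2)) :
    PTd / PTs < PLd / PLs := by
  obtain ⟨hf0, hf1⟩ := hf
  set t := f * (1 - f) with htdef
  have ht0 : 0 < t := mul_pos hf0 (by linarith)
  have ht4 : t ≤ 1/4 := by nlinarith [sq_nonneg (2*f - 1)]
  have hL : 0 < 1 - 2*t := by linarith
  have hT : 0 < 1 - 3*t := by linarith
  set rL := (2*t) / (1 - 2*t) with hrLdef
  set rT := (3*t) / (1 - 3*t) with hrTdef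
  have hrL0 : 0 < rL := div_pos (by linarith) hL
  have hrT0 : 0 < rT := div_pos (by linarith) hT
  set x := PLd / PLs with hxdef
  set y := PTd / PTs with hydef
  have hx0 : 0 < x := div_pos hPLd hPLs
  have hy0 : 0 < y := div_pos hPTd hPTs
  -- rewrite hypothesis
  have e2 : 1 - (f ^ 2 + (1 - f) ^ 2) = 2*t := by rw [htdef]; ring
  have e1 : f ^ 2 + (1 - f) ^ 2 = 1 - 2*t := by rw [htdef]; ring
  have e4 : 1 - (f ^ 3 + (1 - f) ^ 3) = 3*t := by rw [htdef]; ring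
  have e3 : f ^ 3 + (1 - f) ^ 3 = 1 - 3*t := by rw [htdef]; ring
  rw [e2, e1, e4, e3] at h
  have hLHS : (PTd ^ 3 * (3*t)) / (PTs ^ 3 * (1 - 3*t)) = y ^ 3 * rT := by
    rw [hydef, hrTdef]; field_simp
  have hbase : (PLd ^ 2 * (2*t)) / (PLs ^ 2 * (1 - 2*t)) = x ^ 2 * rL := by
    rw [hxdef, hrLdef]; field_simp
  rw [hLHS, hbase] at h
  have hrpow : (x ^ 2 * rL) ^ ((3:ℝ)/2) = x ^ 3 * rL ^ ((3:ℝ)/2) := by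
    rw [Real.mul_rpow (by positivity) hrL0.le]
    congr 1
    rw [← Real.rpow_natCast x 2, ← Real.rpow_mul hx0.le, ← Real.rpow_natCast x 3]
    norm_num
  rw [hrpow] at h
  have key : rL ^ ((3:ℝ)/2) ≤ rT := by
    have hcube : rL ^ 3 ≤ rT ^ 2 := by
      rw [hrLdef, hrTdef, div_pow, div_pow, div_le_div_iff₀ (by positivity) (by positivity)]
      nlinarith [mul_nonneg (mul_nonneg (sq_nonneg t) (by linarith : (0:ℝ) ≤ 1/4 - t))
        (sq_nonneg (12*t - 5)), sq_nonneg t, mul_pos ht0 ht0]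
    have hsq : (rL ^ ((3:ℝ)/2)) ^ 2 ≤ rT ^ 2 := by
      have : (rL ^ ((3:ℝ)/2)) ^ 2 = rL ^ 3 := by
        rw [← Real.rpow_natCast (rL ^ ((3:ℝ)/2)) 2, ← Real.rpow_mul hrL0.le,
          ← Real.rpow_natCast rL 3]
        norm_num
      rw [this]; exact hcube
    have h1 : (0:ℝ) ≤ rL ^ ((3:ℝ)/2) := Real.rpow_nonneg hrL0.le _
    exact (pow_le_pow_iff_left₀ h1 hrT0.le (by norm_num)).mp hsq
  have h2 : y ^ 3 * rT < x ^ 3 * rT :=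
    h.trans_le (by
      have := mul_le_mul_of_nonneg_left key (le_of_lt (by positivity : (0:ℝ) < x ^ 3))
      linarith)
  have h3 : y ^ 3 < x ^ 3 := lt_of_mul_lt_mul_right h2 hrT0.le
  exact lt_of_pow_lt_pow_left₀ 3 hx0.le h3
end

section
/- Identification of a links and Z-stars model: fix integers n > Z ≥ 2 and 0 < d < Z. For β = (β_L, β_Z) ∈ [0,1)² define π(β) = β_L + (1−β_L)(1−(1−β_Z)^{C(n−2,Z−1)}), q_L(β) = β_L + (1−β_L)(1−(1−β_Z)^{2·C(n−2,Z−1)}), and for each integer m ≥ 0, q_m(β) = C(n−1,m)·π(β)^m·(1−π(β))^{n−1−m}·(1−β_Z)^{C(n−1,Z)}. Then the map β ↦ (q_L(β), q_d(β)/q_{d−1}(β)) is injective on [0,1)², with the convention 0/0 = 0 for the ratio. -/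
/-- The probability that a given edge incident to a node forms other than through a star
centered at that node, in the links and `Z`-stars model. -/
noncomputable def piStar (n Z : ℕ) (β : ℝ × ℝ) : ℝ :=
  β.1 + (1 - β.1) * (1 - (1 - β.2) ^ ((n - 2).choose (Z - 1)))

/-- The probability that a given link is present in the links and `Z`-stars model. -/
noncomputable def qLStar (n Z : ℕ) (β : ℝ × ℝ) : ℝ :=
  β.1 + (1 - β.1) * (1 - (1 - β.2) ^ (2 * (n - 2).choose (Z - 1)))

/-- The probability that a given node has degree exactly `m < Z` in the links and
`Z`-stars model. -/
noncomputable def qDeg (n Z m : ℕ) (β : ℝ × ℝ) : ℝ :=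
  ((n - 1).choose m : ℝ) * piStar n Z β ^ m * (1 - piStar n Z β) ^ (n - 1 - m) *
    (1 - β.2) ^ ((n - 1).choose Z)

private lemma ratio_eq (n Z d : ℕ) (hZ : 2 ≤ Z) (hnZ : Z < n) (hd0 : 0 < d) (hdZ : d < Z)
    (β : ℝ × ℝ) (hb1 : β.1 ∈ Set.Ico (0:ℝ) 1) (hb2 : β.2 ∈ Set.Ico (0:ℝ) 1) :
    qDeg n Z d β / qDeg n Z (d - 1) β =
      (((n-1).choose d : ℝ) / ((n-1).choose (d-1) : ℝ)) *
        (piStar n Z β / (1 - piStar n Z β)) := by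
  have hx : 0 < 1 - β.1 := by linarith [hb1.2]
  have hy2 : 0 < 1 - β.2 := by linarith [hb2.2]
  have hP : (0:ℝ) < (1 - β.2) ^ ((n - 1).choose Z) := pow_pos hy2 _
  have hyc : (0:ℝ) < (1 - β.2) ^ ((n-2).choose (Z-1)) := pow_pos hy2 _
  have hyc1 : (1 - β.2) ^ ((n-2).choose (Z-1)) ≤ 1 :=
    pow_le_one₀ (le_of_lt hy2) (by linarith [hb2.1])
  have hpi1 : 1 - piStar n Z β > 0 := by
    have : 1 - piStar n Z β = (1 - β.1) * (1 - β.2) ^ ((n-2).choose (Z-1)) := by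
      unfold piStar; ring
    rw [this]; positivity
  have hB : (0:ℝ) < ((n-1).choose (d-1) : ℝ) := by
    exact_mod_cast Nat.choose_pos (by omega)
  have hnd : n - 1 - (d - 1) = (n - 1 - d) + 1 := by omega
  have hdd : d = (d - 1) + 1 := by omega
  by_cases hpi0 : piStar n Z β = 0
  · rw [hpi0]
    unfold qDeg
    rw [hpi0, zero_pow (by omega)]
    simp
  · unfold qDeg
    rw [hnd, pow_succ]
    have hpow : piStar n Z β ^ d = piStar n Z β ^ (d-1) * piStar n Z β := by
      rw [← pow_succ, ← hdd]
    rw [hpow]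
    field_simp

/-- identification of a links and `Z`-stars model.  For `n > Z ≥ 2` and
`0 < d < Z`, the map `β ↦ (q_L(β), q_d(β)/q_{d-1}(β))` is injective on `[0,1)²`
(with the convention `0/0 = 0`, which is the Lean convention for division). -/
theorem stmt15 (n Z d : ℕ) (hZ : 2 ≤ Z) (hnZ : Z < n) (hd0 : 0 < d) (hdZ : d < Z) :
    Set.InjOn
      (fun β : ℝ × ℝ => (qLStar n Z β, qDeg n Z d β / qDeg n Z (d - 1) β))
      (Set.Ico (0 : ℝ) 1 ×ˢ Set.Ico (0 : ℝ) 1) := by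
  intro β hβ β' hβ' heq
  obtain ⟨hb1, hb2⟩ := hβ
  obtain ⟨hb1', hb2'⟩ := hβ'
  simp only [Prod.mk.injEq] at heq
  obtain ⟨hqL, hr⟩ := heq
  rw [ratio_eq n Z d hZ hnZ hd0 hdZ β hb1 hb2,
      ratio_eq n Z d hZ hnZ hd0 hdZ β' hb1' hb2'] at hr
  set c := (n-2).choose (Z-1) with hcdef
  have hc : 0 < c := Nat.choose_pos (by omega)
  have hx : 0 < 1 - β.1 := by linarith [hb1.2]
  have hx' : 0 < 1 - β'.1 := by linarith [hb1'.2]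
  have hy2 : 0 < 1 - β.2 := by linarith [hb2.2]
  have hy2' : 0 < 1 - β'.2 := by linarith [hb2'.2]
  have hyc : (0:ℝ) < (1 - β.2) ^ c := pow_pos hy2 _
  have hyc' : (0:ℝ) < (1 - β'.2) ^ c := pow_pos hy2' _
  have hpi : 1 - piStar n Z β = (1 - β.1) * (1 - β.2) ^ c := by unfold piStar; ring
  have hpi' : 1 - piStar n Z β' = (1 - β'.1) * (1 - β'.2) ^ c := by unfold piStar; ring
  have hpi1 : 0 < 1 - piStar n Z β := by rw [hpi]; positivity
  have hpi1' : 0 < 1 - piStar n Z β' := by rw [hpi']; positivity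
  have hA : (0:ℝ) < ((n-1).choose d : ℝ) := by exact_mod_cast Nat.choose_pos (by omega)
  have hB : (0:ℝ) < ((n-1).choose (d-1) : ℝ) := by exact_mod_cast Nat.choose_pos (by omega)
  -- from hr deduce piStar equal
  have hK : (0:ℝ) < ((n-1).choose d : ℝ) / ((n-1).choose (d-1) : ℝ) := by positivity
  have hdiv : piStar n Z β / (1 - piStar n Z β) = piStar n Z β' / (1 - piStar n Z β') :=
    mul_left_cancel₀ (ne_of_gt hK) hr
  have hpieq : piStar n Z β = piStar n Z β' := by
    rw [div_eq_div_iff (ne_of_gt hpi1) (ne_of_gt hpi1')] at hdiv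
    nlinarith [hdiv]
  -- so the products xy are equal
  have ha : (1 - β.1) * (1 - β.2) ^ c = (1 - β'.1) * (1 - β'.2) ^ c := by
    rw [← hpi, ← hpi', hpieq]
  -- from qL equality, the products x y^2 are equal
  have hqL2 : (1 - β.1) * ((1 - β.2) ^ c) ^ 2 = (1 - β'.1) * ((1 - β'.2) ^ c) ^ 2 := by
    have e : ∀ γ : ℝ × ℝ, qLStar n Z γ = 1 - (1 - γ.1) * ((1 - γ.2) ^ c) ^ 2 := by
      intro γ
      unfold qLStar
      rw [← hcdef, mul_comm 2 c, pow_mul]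
      ring
    rw [e β, e β'] at hqL
    linarith
  -- deduce y = y'
  have hyeq : (1 - β.2) ^ c = (1 - β'.2) ^ c := by
    have h1 : (1 - β.1) * (1 - β.2) ^ c * (1 - β.2) ^ c
        = (1 - β.1) * (1 - β.2) ^ c * (1 - β'.2) ^ c := by
      rw [ha]; nlinarith [hqL2]
    exact mul_left_cancel₀ (by positivity) h1
  have hxeq : 1 - β.1 = 1 - β'.1 := by
    rw [hyeq] at ha
    exact mul_right_cancel₀ (ne_of_gt hyc') ha
  have hb2eq : β.2 = β'.2 := by
    have := (pow_left_inj₀ (le_of_lt hy2) (le_of_lt hy2') hc.ne').mp hyeq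
    linarith
  have hb1eq : β.1 = β'.1 := by linarith
  exact Prod.ext hb1eq hb2eq
end

section
/- Identifiable uniqueness for links and triangles: fix constants 0 < D̲ < D̄ < ∞, exponents h_L > 1/2 and h_T ∈ [h_L + 1, 3h_L), and a true parameter sequence β_0^n = (b_{0,L}/n^{h_L}, b_{0,T}/n^{h_T}) with b_{0,L}, b_{0,T} ∈ [D̲, D̄]. For β = (β_L, β_T) define q_L(β) = β_L + (1−β_L)(1−(1−β_T)^{n−2}) and q_T(β) = β_T + (1−β_T)(β_L + (1−β_L)(1−(1−β_T)^{n−3}))³, and define Q̄^n(β) = n^{2h_L}(q_L(β) − q_L(β_0^n))² + n^{2h_T}(q_T(β) − q_T(β_0^n))². Let δ(x,y) = max_ℓ |x_ℓ − y_ℓ| / max(|x_ℓ|, |y_ℓ|) (with 0/0 = 0). Then for every ε > 0, liminf_{n→∞} of the infimum of Q̄^n(β) over all β of the form (b_L/n^{h_L}, b_T/n^{h_T}) with b_L, b_T ∈ [D̲, D̄] and δ(β, β_0^n) > ε is strictly positive. -/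
open Filter

private lemma bern_low (s : ℝ) (hs0 : 0 ≤ s) (hs1 : s ≤ 1) (m : ℕ) :
    1 - (m : ℝ) * s ≤ (1 - s) ^ m := by
  induction m with
  | zero => simp
  | succ k ih =>
    have h1 : (0:ℝ) ≤ 1 - s := by linarith
    have hk : (0:ℝ) ≤ k := Nat.cast_nonneg k
    calc 1 - ((k+1 : ℕ) : ℝ) * s ≤ (1 - s) * (1 - (k:ℝ) * s) := by
          push_cast; nlinarith [mul_nonneg (mul_nonneg hk hs0) hs0]
      _ ≤ (1 - s) * (1 - s)^k := by nlinarith [ih]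
      _ = (1-s)^(k+1) := by ring

private lemma bern_up (s : ℝ) (hs0 : 0 ≤ s) (hs1 : s ≤ 1) (m : ℕ) :
    (1 - s) ^ m ≤ 1 - (m : ℝ) * s + (m : ℝ)^2 * s^2 := by
  induction m with
  | zero => norm_num
  | succ k ih =>
    have h1 : (0:ℝ) ≤ 1 - s := by linarith
    have hk : (0:ℝ) ≤ k := Nat.cast_nonneg k
    have hh : (1-s)^(k+1) = (1-s) * (1-s)^k := by ring
    rw [hh]
    calc (1-s) * (1-s)^k ≤ (1-s) * (1 - (k:ℝ)*s + (k:ℝ)^2*s^2) := by nlinarith [ih]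
      _ ≤ 1 - ((k+1:ℕ):ℝ) * s + ((k+1:ℕ):ℝ)^2 * s^2 := by
          push_cast
          nlinarith [mul_nonneg (mul_nonneg (mul_nonneg hk hk) hs0) (mul_nonneg hs0 hs0),
            mul_nonneg hk (mul_nonneg hs0 hs0), sq_nonneg s]

private lemma qL_err (m : ℕ) (t s : ℝ) (ht0 : 0 ≤ t) (ht1 : t ≤ 1)
    (hs0 : 0 ≤ s) (hs1 : s ≤ 1) :
    |t + (1 - t) * (1 - (1 - s) ^ m) - (t + (m:ℝ) * s)| ≤ (m:ℝ) * t * s + (m:ℝ)^2 * s^2 := by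
  have h1 := bern_low s hs0 hs1 m
  have h2 := bern_up s hs0 hs1 m
  have hm : (0:ℝ) ≤ m := Nat.cast_nonneg m
  have hE0 : 0 ≤ (1-s)^m - (1 - (m:ℝ)*s) := by linarith
  have hE2 : (1-s)^m - (1 - (m:ℝ)*s) ≤ (m:ℝ)^2*s^2 := by linarith
  have htE : 0 ≤ t * ((1-s)^m - (1 - (m:ℝ)*s)) := mul_nonneg ht0 hE0
  have hts : 0 ≤ (m:ℝ) * t * s := mul_nonneg (mul_nonneg hm ht0) hs0
  rw [abs_le]
  constructor <;>
    nlinarith [htE, hts, hE0, hE2, mul_nonneg (mul_nonneg hm hm) (mul_nonneg hs0 hs0)]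

private lemma P_bounds (m : ℕ) (t s : ℝ) (ht0 : 0 ≤ t) (ht1 : t ≤ 1)
    (hs0 : 0 ≤ s) (hs1 : s ≤ 1) :
    0 ≤ t + (1 - t) * (1 - (1 - s) ^ m) ∧ t + (1 - t) * (1 - (1 - s) ^ m) ≤ t + (m:ℝ) * s := by
  have h1 := bern_low s hs0 hs1 m
  have hle1 : (1-s)^m ≤ 1 := pow_le_one₀ (by linarith) (by linarith)
  have hm : (0:ℝ) ≤ m := Nat.cast_nonneg m
  constructor
  · nlinarith [mul_nonneg (sub_nonneg.mpr ht1) (sub_nonneg.mpr hle1)]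
  · nlinarith [mul_nonneg ht0 (sub_nonneg.mpr hle1), mul_nonneg ht0 (mul_nonneg hm hs0)]

private lemma final_ineq (a b x y κ E : ℝ) (hκ0 : 0 ≤ κ) (hκ1 : κ ≤ 1)
    (h1 : (a - (x + κ*y))^2 ≤ E/24) (h2 : (b - y)^2 ≤ E/24) (hxy : E ≤ x^2 + y^2) :
    E/12 ≤ a^2 + b^2 := by
  have k1 : (x+κ*y)^2/2 - (a-(x+κ*y))^2 ≤ a^2 := by nlinarith [sq_nonneg (2*a - (x+κ*y))]
  have k2 : y^2/2 - (b-y)^2 ≤ b^2 := by nlinarith [sq_nonneg (2*b - y)]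
  have k3 : (x^2+y^2)/3 ≤ (x+κ*y)^2 + y^2 := by
    nlinarith [sq_nonneg (2*x+3*κ*y), sq_nonneg y,
      mul_nonneg (mul_nonneg (sub_nonneg.mpr hκ1) (by linarith : (0:ℝ) ≤ 1+κ)) (sq_nonneg y)]
  linarith


/-- `q_L(β)`: the probability that a given edge is present in the links-and-triangles
SUGM on `n` nodes with parameters `β = (β_L, β_T)`. -/
noncomputable def qLfun (n : ℕ) (β : ℝ × ℝ) : ℝ :=
  β.1 + (1 - β.1) * (1 - (1 - β.2) ^ (n - 2))

/-- `q_T(β)`: the probability that a given triple forms a triangle in the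
links-and-triangles SUGM on `n` nodes with parameters `β = (β_L, β_T)`. -/
noncomputable def qTfun (n : ℕ) (β : ℝ × ℝ) : ℝ :=
  β.2 + (1 - β.2) * (β.1 + (1 - β.1) * (1 - (1 - β.2) ^ (n - 3))) ^ 3

/-- The population GMM objective built from the moments `(S_L, S_T)` normalized by the
rate matrix `diag(n^{h_L}, n^{h_T})`. -/
noncomputable def Qbar (n : ℕ) (hL hT : ℝ) (β0 β : ℝ × ℝ) : ℝ :=
  (n : ℝ) ^ (2 * hL) * (qLfun n β - qLfun n β0) ^ 2 +
    (n : ℝ) ^ (2 * hT) * (qTfun n β - qTfun n β0) ^ 2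

/-- The relative-distance metric `δ(x,y) = max_ℓ |x_ℓ - y_ℓ| / max(|x_ℓ|, |y_ℓ|)`
(with the convention `0/0 = 0`, which is the Lean convention for division). -/
noncomputable def relDist (x y : ℝ × ℝ) : ℝ :=
  max (|x.1 - y.1| / max |x.1| |y.1|) (|x.2 - y.2| / max |x.2| |y.2|)

/-- identifiable uniqueness for links and triangles.  With
`β_0^n = (b_{0,L}/n^{h_L}, b_{0,T}/n^{h_T})`, `b_{0,L}, b_{0,T} ∈ [D̲, D̄]`, `h_L > 1/2`,
`h_T ∈ [h_L + 1, 3 h_L)`, and every `ε > 0`: the liminf over `n` of the infimum of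
`Q̄^n(β)` over admissible `β = (b_L/n^{h_L}, b_T/n^{h_T})` with `b_L, b_T ∈ [D̲, D̄]` and
`δ(β, β_0^n) > ε` is strictly positive, i.e. there is a `c > 0` below every such value
for all large `n`. -/
theorem stmt19 (Dlo Dhi hL hT : ℝ) (hDlo : 0 < Dlo) (hD : Dlo < Dhi)
    (hhL : 1 / 2 < hL) (hhT1 : hL + 1 ≤ hT) (hhT2 : hT < 3 * hL)
    (b0L b0T : ℝ) (hb0L : b0L ∈ Set.Icc Dlo Dhi) (hb0T : b0T ∈ Set.Icc Dlo Dhi)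
    (ε : ℝ) (hε : 0 < ε) :
    ∃ c > (0 : ℝ), ∀ᶠ n : ℕ in atTop,
      ∀ bL ∈ Set.Icc Dlo Dhi, ∀ bT ∈ Set.Icc Dlo Dhi,
        relDist (bL / (n : ℝ) ^ hL, bT / (n : ℝ) ^ hT)
            (b0L / (n : ℝ) ^ hL, b0T / (n : ℝ) ^ hT) > ε →
          c ≤ Qbar n hL hT (b0L / (n : ℝ) ^ hL, b0T / (n : ℝ) ^ hT)
              (bL / (n : ℝ) ^ hL, bT / (n : ℝ) ^ hT) := by
  obtain ⟨hb0L1, hb0L2⟩ := hb0L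
  obtain ⟨hb0T1, hb0T2⟩ := hb0T
  have hεD : 0 < ε * Dlo := mul_pos hε hDlo
  have hhLpos : 0 < hL := by linarith
  have hhTpos : 0 < hT := by linarith
  have hDhi : 0 < Dhi := hDlo.trans hD
  refine ⟨(ε*Dlo)^2/12, by positivity, ?_⟩
  have hev1 : ∀ᶠ n : ℕ in atTop, Dhi ≤ (n:ℝ)^hL :=
    ((tendsto_rpow_atTop hhLpos).comp tendsto_natCast_atTop_atTop).eventually_ge_atTop Dhi
  have hev2 : ∀ᶠ n : ℕ in atTop, Dhi ≤ (n:ℝ)^hT :=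
    ((tendsto_rpow_atTop hhTpos).comp tendsto_natCast_atTop_atTop).eventually_ge_atTop Dhi
  have hev3 : ∀ᶠ n : ℕ in atTop, (1:ℝ) ≤ (n:ℝ) := by
    filter_upwards [eventually_ge_atTop 1] with n hn
    exact_mod_cast hn
  have hev4 : ∀ᶠ n : ℕ in atTop, (4*Dhi^2)^2 * (n:ℝ)^(-(1:ℝ)) ≤ (ε*Dlo)^2/24 := by
    have h0 : Tendsto (fun n : ℕ => (4*Dhi^2)^2 * ((n:ℝ)) ^ (-(1:ℝ))) atTop (nhds ((4*Dhi^2)^2 * 0)) :=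
      (((tendsto_rpow_neg_atTop one_pos).comp tendsto_natCast_atTop_atTop)).const_mul _
    rw [mul_zero] at h0
    exact h0.eventually_le_const (by positivity)
  have hev5 : ∀ᶠ n : ℕ in atTop, (16*Dhi^3)^2 * (n:ℝ)^(-(2*(3*hL-hT))) ≤ (ε*Dlo)^2/24 := by
    have h0 : Tendsto (fun n : ℕ => (16*Dhi^3)^2 * ((n:ℝ)) ^ (-(2*(3*hL-hT)))) atTop
        (nhds ((16*Dhi^3)^2 * 0)) :=
      (((tendsto_rpow_neg_atTop (by linarith)).comp tendsto_natCast_atTop_atTop)).const_mul _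
    rw [mul_zero] at h0
    exact h0.eventually_le_const (by positivity)
  filter_upwards [hev1, hev2, hev3, hev4, hev5] with n hn1 hn2 hn3 hn4 hn5
  intro bL hbL bT hbT hrel
  obtain ⟨hbL1, hbL2⟩ := hbL
  obtain ⟨hbT1, hbT2⟩ := hbT
  set N : ℝ := (n:ℝ) with hNdef
  have hN0 : 0 < N := lt_of_lt_of_le one_pos hn3
  have hS : 0 < N ^ hL := Real.rpow_pos_of_pos hN0 hL
  have hTp : 0 < N ^ hT := Real.rpow_pos_of_pos hN0 hT
  set x := bL - b0L with hxdef
  set y := bT - b0T with hydef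
  -- Step 1: from relDist, get (ε*Dlo)^2 ≤ x^2 + y^2
  have hxy : (ε*Dlo)^2 ≤ x^2 + y^2 := by
    have hML : 0 < max bL b0L := lt_max_of_lt_left (hDlo.trans_le hbL1)
    have hMT : 0 < max bT b0T := lt_max_of_lt_left (hDlo.trans_le hbT1)
    have eL : |bL / N^hL - b0L / N^hL| / max |bL / N^hL| |b0L / N^hL| = |x| / max bL b0L := by
      rw [abs_of_pos (div_pos (hDlo.trans_le hbL1) hS), abs_of_pos (div_pos (hDlo.trans_le hb0L1) hS),
          max_div_div_right hS.le, ← sub_div, abs_div, abs_of_pos hS]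
      field_simp
      rfl
    have eT : |bT / N^hT - b0T / N^hT| / max |bT / N^hT| |b0T / N^hT| = |y| / max bT b0T := by
      rw [abs_of_pos (div_pos (hDlo.trans_le hbT1) hTp), abs_of_pos (div_pos (hDlo.trans_le hb0T1) hTp),
          max_div_div_right hTp.le, ← sub_div, abs_div, abs_of_pos hTp]
      field_simp
      rfl
    have hrel' : ε < max (|x| / max bL b0L) (|y| / max bT b0T) := by
      have := hrel
      simp only [relDist] at this
      rw [eL, eT] at this
      exact this
    rcases lt_max_iff.mp hrel' with h | h
    · have h1 : ε * max bL b0L < |x| := (lt_div_iff₀ hML).mp h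
      have h2 : ε * Dlo ≤ ε * max bL b0L :=
        mul_le_mul_of_nonneg_left (le_max_of_le_left hbL1) hε.le
      have h3 : (ε*Dlo)^2 ≤ |x|^2 := pow_le_pow_left₀ hεD.le (h2.trans h1.le) 2
      rw [sq_abs] at h3
      linarith [sq_nonneg y]
    · have h1 : ε * max bT b0T < |y| := (lt_div_iff₀ hMT).mp h
      have h2 : ε * Dlo ≤ ε * max bT b0T :=
        mul_le_mul_of_nonneg_left (le_max_of_le_left hbT1) hε.le
      have h3 : (ε*Dlo)^2 ≤ |y|^2 := pow_le_pow_left₀ hεD.le (h2.trans h1.le) 2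
      rw [sq_abs] at h3
      linarith [sq_nonneg x]
  -- rpow helpers
  have hadd : ∀ a b : ℝ, N^(a+b) = N^a * N^b := fun a b => Real.rpow_add hN0 a b
  have hone : N^(1:ℝ) = N := Real.rpow_one N
  have hmono : ∀ a b : ℝ, a ≤ b → N^a ≤ N^b := fun a b h =>
    Real.rpow_le_rpow_of_exponent_le hn3 h
  have hneg : ∀ a : ℝ, N^(-a) = (N^a)⁻¹ := fun a => Real.rpow_neg hN0.le a
  have hm2 : ((n-2:ℕ):ℝ) ≤ N := by rw [hNdef]; exact_mod_cast Nat.sub_le n 2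
  have hm2' : (0:ℝ) ≤ ((n-2:ℕ):ℝ) := Nat.cast_nonneg _
  have hm3 : ((n-3:ℕ):ℝ) ≤ N := by rw [hNdef]; exact_mod_cast Nat.sub_le n 3
  have hm3' : (0:ℝ) ≤ ((n-3:ℕ):ℝ) := Nat.cast_nonneg _
  -- abbreviations
  set t1 := bL / N^hL with ht1d
  set t0 := b0L / N^hL with ht0d
  set s1 := bT / N^hT with hs1d
  set s0 := b0T / N^hT with hs0d
  have ht1a : 0 ≤ t1 := div_nonneg (hDlo.le.trans hbL1) hS.le
  have ht1b : t1 ≤ 1 := (div_le_one hS).mpr (hbL2.trans hn1)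
  have ht1c : t1 ≤ Dhi * (N^hL)⁻¹ := by
    rw [ht1d, ← div_eq_mul_inv]; gcongr
  have ht0a : 0 ≤ t0 := div_nonneg (hDlo.le.trans hb0L1) hS.le
  have ht0b : t0 ≤ 1 := (div_le_one hS).mpr (hb0L2.trans hn1)
  have ht0c : t0 ≤ Dhi * (N^hL)⁻¹ := by
    rw [ht0d, ← div_eq_mul_inv]; gcongr
  have hs1a : 0 ≤ s1 := div_nonneg (hDlo.le.trans hbT1) hTp.le
  have hs1b : s1 ≤ 1 := (div_le_one hTp).mpr (hbT2.trans hn2)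
  have hs1c : s1 ≤ Dhi * (N^hT)⁻¹ := by
    rw [hs1d, ← div_eq_mul_inv]; gcongr
  have hs0a : 0 ≤ s0 := div_nonneg (hDlo.le.trans hb0T1) hTp.le
  have hs0b : s0 ≤ 1 := (div_le_one hTp).mpr (hb0T2.trans hn2)
  have hs0c : s0 ≤ Dhi * (N^hT)⁻¹ := by
    rw [hs0d, ← div_eq_mul_inv]; gcongr
  -- generic remainder bound for qL
  have hrem : ∀ u v : ℝ, 0 ≤ u → u ≤ 1 → u ≤ Dhi*(N^hL)⁻¹ → 0 ≤ v → v ≤ 1 →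
      v ≤ Dhi*(N^hT)⁻¹ →
      |qLfun n (u, v) - (u + ((n-2:ℕ):ℝ)*v)| ≤ Dhi^2*N^(1-hL-hT) + Dhi^2*N^(2-2*hT) := by
    intro u v hu0 hu1 huD hv0 hv1 hvD
    have h := qL_err (n-2) u v hu0 hu1 hv0 hv1
    have hq : qLfun n (u, v) = u + (1-u)*(1-(1-v)^(n-2)) := rfl
    rw [hq]
    refine h.trans ?_
    have b1 : ((n-2:ℕ):ℝ) * u * v ≤ N * (Dhi*(N^hL)⁻¹) * (Dhi*(N^hT)⁻¹) := by
      have := mul_le_mul (mul_le_mul hm2 huD hu0 hN0.le) hvD hv0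
        (mul_nonneg hN0.le (by positivity))
      exact this
    have b2 : ((n-2:ℕ):ℝ)^2 * v^2 ≤ N^2 * (Dhi*(N^hT)⁻¹)^2 := by
      have h1 : ((n-2:ℕ):ℝ)^2 ≤ N^2 := pow_le_pow_left₀ hm2' hm2 2
      have h2 : v^2 ≤ (Dhi*(N^hT)⁻¹)^2 := pow_le_pow_left₀ hv0 hvD 2
      exact mul_le_mul h1 h2 (sq_nonneg v) (sq_nonneg N)
    have id1 : N * (Dhi*(N^hL)⁻¹) * (Dhi*(N^hT)⁻¹) = Dhi^2 * N^(1-hL-hT) := by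
      rw [show (1-hL-hT) = 1 + -hL + -hT by ring, hadd, hadd, hone, hneg, hneg]; ring
    have id2 : N^2 * (Dhi*(N^hT)⁻¹)^2 = Dhi^2 * N^(2-2*hT) := by
      rw [show (2-2*hT) = 1 + 1 + -hT + -hT by ring, hadd, hadd, hadd, hone, hneg]; ring
    rw [id1] at b1; rw [id2] at b2
    linarith
  -- generic remainder bound for qT
  have hremT : ∀ u v : ℝ, 0 ≤ u → u ≤ 1 → u ≤ Dhi*(N^hL)⁻¹ → 0 ≤ v → v ≤ 1 →
      v ≤ Dhi*(N^hT)⁻¹ →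
      |qTfun n (u, v) - v| ≤ 8*Dhi^3 * N^(-(3*hL)) := by
    intro u v hu0 hu1 huD hv0 hv1 hvD
    obtain ⟨hP0, hP1⟩ := P_bounds (n-3) u v hu0 hu1 hv0 hv1
    have hq : qTfun n (u, v) - v = (1-v) * (u + (1-u)*(1-(1-v)^(n-3)))^3 := by
      show v + (1-v) * (u + (1-u)*(1-(1-v)^(n-3)))^3 - v = _
      ring
    have hP3 : (0:ℝ) ≤ (u + (1-u)*(1-(1-v)^(n-3)))^3 := pow_nonneg hP0 3
    rw [hq, abs_of_nonneg (mul_nonneg (by linarith : (0:ℝ) ≤ 1-v) hP3)]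
    have hPle : u + (1-u)*(1-(1-v)^(n-3)) ≤ 2*Dhi * N^(-hL) := by
      refine hP1.trans ?_
      have h1 : ((n-3:ℕ):ℝ) * v ≤ N * (Dhi*(N^hT)⁻¹) :=
        mul_le_mul hm3 hvD hv0 hN0.le
      have id1 : N * (Dhi*(N^hT)⁻¹) = Dhi * N^(1-hT) := by
        rw [show (1-hT) = 1 + -hT by ring, hadd, hone, hneg]; ring
      rw [id1] at h1
      have h2 : N^(1-hT) ≤ N^(-hL) := hmono _ _ (by linarith)
      have h3 : N^(-hL) = (N^hL)⁻¹ := hneg hL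
      have h4 : u ≤ Dhi * N^(-hL) := by rw [h3]; exact huD
      have h5 : Dhi * N^(1-hT) ≤ Dhi * N^(-hL) := mul_le_mul_of_nonneg_left h2 hDhi.le
      linarith
    calc (1-v) * (u + (1-u)*(1-(1-v)^(n-3)))^3
        ≤ 1 * (u + (1-u)*(1-(1-v)^(n-3)))^3 := by
          apply mul_le_mul_of_nonneg_right (by linarith) hP3
      _ = (u + (1-u)*(1-(1-v)^(n-3)))^3 := one_mul _
      _ ≤ (2*Dhi * N^(-hL))^3 := pow_le_pow_left₀ hP0 hPle 3
      _ = 8*Dhi^3 * N^(-(3*hL)) := by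
          rw [show -(3*hL) = -hL + -hL + -hL by ring, hadd, hadd]; ring
  -- the linear parts
  set κ := ((n-2:ℕ):ℝ) * N^(hL-hT) with hκd
  have hκ0 : 0 ≤ κ := mul_nonneg hm2' (Real.rpow_pos_of_pos hN0 _).le
  have hκ1 : κ ≤ 1 := by
    have h1 : κ ≤ N * N^(hL-hT) :=
      mul_le_mul_of_nonneg_right hm2 (Real.rpow_pos_of_pos hN0 _).le
    have h2 : N * N^(hL-hT) = N^(1+(hL-hT)) := by rw [hadd, hone]
    have h3 : N^(1+(hL-hT)) ≤ N^(0:ℝ) := hmono _ _ (by linarith)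
    rw [Real.rpow_zero] at h3
    linarith [h1, h2 ▸ h3]
  have lin1 : N^hL * ((t1 + ((n-2:ℕ):ℝ)*s1) - (t0 + ((n-2:ℕ):ℝ)*s0)) = x + κ*y := by
    rw [ht1d, ht0d, hs1d, hs0d, hκd, hxdef, hydef, Real.rpow_sub hN0]
    field_simp
    ring
  have lin2 : N^hT * (s1 - s0) = y := by
    rw [hs1d, hs0d, hydef]
    field_simp
  -- error bounds after scaling
  have he1 : |N^hL * (qLfun n (t1,s1) - qLfun n (t0,s0)) - (x + κ*y)| ≤ 4*Dhi^2 * N^(-(2:ℝ)⁻¹) := by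
    have hsplit : N^hL * (qLfun n (t1,s1) - qLfun n (t0,s0)) - (x + κ*y)
        = N^hL * ((qLfun n (t1,s1) - (t1 + ((n-2:ℕ):ℝ)*s1))
            - (qLfun n (t0,s0) - (t0 + ((n-2:ℕ):ℝ)*s0))) := by
      rw [← lin1]; ring
    rw [hsplit, abs_mul, abs_of_pos hS]
    have hr1 := hrem t1 s1 ht1a ht1b ht1c hs1a hs1b hs1c
    have hr0 := hrem t0 s0 ht0a ht0b ht0c hs0a hs0b hs0c
    have habs : |(qLfun n (t1,s1) - (t1 + ((n-2:ℕ):ℝ)*s1))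
        - (qLfun n (t0,s0) - (t0 + ((n-2:ℕ):ℝ)*s0))|
        ≤ 2*(Dhi^2*N^(1-hL-hT) + Dhi^2*N^(2-2*hT)) := by
      calc _ ≤ |qLfun n (t1,s1) - (t1 + ((n-2:ℕ):ℝ)*s1)|
            + |qLfun n (t0,s0) - (t0 + ((n-2:ℕ):ℝ)*s0)| := abs_sub _ _
        _ ≤ _ := by linarith
    refine le_trans (mul_le_mul_of_nonneg_left habs hS.le) ?_
    have idA : N^hL * N^(1-hL-hT) = N^(1-hT) := by
      rw [← hadd, show hL + (1-hL-hT) = 1-hT by ring]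
    have idB : N^hL * N^(2-2*hT) = N^(hL+(2-2*hT)) := (hadd _ _).symm
    have e1 : N^(1-hT) ≤ N^(-(2:ℝ)⁻¹) := hmono _ _ (by norm_num; linarith)
    have e2 : N^(hL+(2-2*hT)) ≤ N^(-(2:ℝ)⁻¹) := hmono _ _ (by norm_num; linarith)
    have hD2 : (0:ℝ) ≤ 2*Dhi^2 := by positivity
    calc N^hL * (2*(Dhi^2*N^(1-hL-hT) + Dhi^2*N^(2-2*hT)))
        = 2*Dhi^2 * (N^hL * N^(1-hL-hT)) + 2*Dhi^2 * (N^hL * N^(2-2*hT)) := by ring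
      _ = 2*Dhi^2 * N^(1-hT) + 2*Dhi^2 * N^(hL+(2-2*hT)) := by rw [idA, idB]
      _ ≤ 2*Dhi^2 * N^(-(2:ℝ)⁻¹) + 2*Dhi^2 * N^(-(2:ℝ)⁻¹) := by
          have q1 := mul_le_mul_of_nonneg_left e1 hD2
          have q2 := mul_le_mul_of_nonneg_left e2 hD2
          linarith
      _ = 4*Dhi^2 * N^(-(2:ℝ)⁻¹) := by ring
  have he2 : |N^hT * (qTfun n (t1,s1) - qTfun n (t0,s0)) - y| ≤ 16*Dhi^3 * N^(hT-3*hL) := by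
    have hsplit : N^hT * (qTfun n (t1,s1) - qTfun n (t0,s0)) - y
        = N^hT * ((qTfun n (t1,s1) - s1) - (qTfun n (t0,s0) - s0)) := by
      rw [← lin2]; ring
    rw [hsplit, abs_mul, abs_of_pos hTp]
    have hr1 := hremT t1 s1 ht1a ht1b ht1c hs1a hs1b hs1c
    have hr0 := hremT t0 s0 ht0a ht0b ht0c hs0a hs0b hs0c
    have habs : |(qTfun n (t1,s1) - s1) - (qTfun n (t0,s0) - s0)|
        ≤ 2*(8*Dhi^3 * N^(-(3*hL))) := by
      calc _ ≤ |qTfun n (t1,s1) - s1| + |qTfun n (t0,s0) - s0| := abs_sub _ _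
        _ ≤ _ := by linarith
    refine le_trans (mul_le_mul_of_nonneg_left habs hTp.le) (le_of_eq ?_)
    have idC : N^hT * N^(-(3*hL)) = N^(hT-3*hL) := by
      rw [← hadd, show hT + -(3*hL) = hT - 3*hL by ring]
    calc N^hT * (2*(8*Dhi^3 * N^(-(3*hL))))
        = 16*Dhi^3 * (N^hT * N^(-(3*hL))) := by ring
      _ = 16*Dhi^3 * N^(hT-3*hL) := by rw [idC]
  -- squared error bounds
  have he1sq : (N^hL * (qLfun n (t1,s1) - qLfun n (t0,s0)) - (x + κ*y))^2 ≤ (ε*Dlo)^2/24 := by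
    have h1 : (N^hL * (qLfun n (t1,s1) - qLfun n (t0,s0)) - (x + κ*y))^2
        ≤ (4*Dhi^2 * N^(-(2:ℝ)⁻¹))^2 := by
      rw [← sq_abs]
      exact pow_le_pow_left₀ (abs_nonneg _) he1 2
    have h2 : (4*Dhi^2 * N^(-(2:ℝ)⁻¹))^2 = (4*Dhi^2)^2 * N^(-(1:ℝ)) := by
      rw [mul_pow, sq (N^(-(2:ℝ)⁻¹)), ← hadd]; norm_num
    rw [h2] at h1
    exact h1.trans hn4
  have he2sq : (N^hT * (qTfun n (t1,s1) - qTfun n (t0,s0)) - y)^2 ≤ (ε*Dlo)^2/24 := by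
    have h1 : (N^hT * (qTfun n (t1,s1) - qTfun n (t0,s0)) - y)^2
        ≤ (16*Dhi^3 * N^(hT-3*hL))^2 := by
      rw [← sq_abs]
      exact pow_le_pow_left₀ (abs_nonneg _) he2 2
    have h2 : (16*Dhi^3 * N^(hT-3*hL))^2 = (16*Dhi^3)^2 * N^(-(2*(3*hL-hT))) := by
      rw [mul_pow, sq (N^(hT-3*hL)), ← hadd, show hT-3*hL + (hT-3*hL) = -(2*(3*hL-hT)) by ring]
    rw [h2] at h1
    exact h1.trans hn5
  -- final assembly
  have hQ : Qbar n hL hT (t0,s0) (t1,s1)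
      = (N^hL * (qLfun n (t1,s1) - qLfun n (t0,s0)))^2
        + (N^hT * (qTfun n (t1,s1) - qTfun n (t0,s0)))^2 := by
    simp only [Qbar]
    rw [show (2*hL) = hL + hL by ring, show (2*hT) = hT + hT by ring, hadd, hadd]
    ring
  rw [hQ]
  exact final_ineq _ _ _ _ _ _ hκ0 hκ1 he1sq he2sq hxy
end
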